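/- arXiv:2504.11815 — 6 statements merged into one kernel-verified Lean document; each statement's English description precedes it below -/
import Mathlib

section
/- For all x, y, z ∈ ℍⁿ_κ, the comparison inequality d(x,y)² + d(x,z)² − 2⟨log_x y, log_x z⟩ ≤ d(y,z)² holds. -/
noncomputable section

/-- Lorentzian inner product on ℝ^{n+1}. -/
def lip {n : ℕ} (x y : Fin (n+1) → ℝ) : ℝ :=
  (∑ i : Fin n, x i.castSucc * y i.castSucc) - x (Fin.last n) * y (Fin.last n)

/-- Lorentzian norm (of vectors with nonnegative self-product). -/
def lnorm {n : ℕ} (x : Fin (n+1) → ℝ) : ℝ := Real.sqrt (lip x x)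

/-- Euclidean dot product. -/
def edot {n : ℕ} (x y : Fin (n+1) → ℝ) : ℝ := ∑ i, x i * y i

/-- The matrix J = diag(1,…,1,−1) as a map. -/
def Jm {n : ℕ} (x : Fin (n+1) → ℝ) : Fin (n+1) → ℝ :=
  fun i => if i = Fin.last n then -(x i) else x i

/-- The κ-hyperbolic space form (hyperboloid model). -/
def Hyp {n : ℕ} (κ : ℝ) : Set (Fin (n+1) → ℝ) :=
  {p | lip p p = -1/κ ∧ 0 < p (Fin.last n)}

/-- Inverse hyperbolic cosine. -/
def arcosh (x : ℝ) : ℝ := Real.log (x + Real.sqrt (x^2 - 1))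

/-- Intrinsic distance on the κ-hyperbolic space form. -/
def dH {n : ℕ} (κ : ℝ) (p q : Fin (n+1) → ℝ) : ℝ :=
  (1 / Real.sqrt κ) * arcosh (-(κ * lip p q))

/-- Lorentzian projection onto the tangent space at p. -/
def projT {n : ℕ} (κ : ℝ) (p x : Fin (n+1) → ℝ) : Fin (n+1) → ℝ :=
  x + (κ * lip p x) • p

/-- Logarithm map of the κ-hyperbolic space form. -/
def logH {n : ℕ} (κ : ℝ) (p q : Fin (n+1) → ℝ) : Fin (n+1) → ℝ :=
  (dH κ p q / lnorm (projT κ p q)) • projT κ p q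

/-- Exponential map of the κ-hyperbolic space form. -/
def expH {n : ℕ} (κ : ℝ) (p v : Fin (n+1) → ℝ) : Fin (n+1) → ℝ :=
  Real.cosh (Real.sqrt κ * lnorm v) • p +
    (Real.sinh (Real.sqrt κ * lnorm v) / (Real.sqrt κ * lnorm v)) • v

/-- The cone spanned by a set. -/
def coneOf {n : ℕ} (C : Set (Fin (n+1) → ℝ)) : Set (Fin (n+1) → ℝ) :=
  {x | ∃ t : ℝ, 0 ≤ t ∧ ∃ p ∈ C, x = t • p}

/-- The Lorentz cone. -/
def LorentzCone {n : ℕ} : Set (Fin (n+1) → ℝ) :=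
  {x | lip x x ≤ 0 ∧ 0 ≤ x (Fin.last n)}

/-- The interior of the Lorentz cone. -/
def LorentzConeInt {n : ℕ} : Set (Fin (n+1) → ℝ) :=
  {x | lip x x < 0 ∧ 0 < x (Fin.last n)}

lemma lip_comm {n : ℕ} (x y : Fin (n+1) → ℝ) : lip x y = lip y x := by
  simp only [lip]
  congr 1
  · exact Finset.sum_congr rfl fun i _ => mul_comm _ _
  · ring

lemma lip_add_left {n : ℕ} (x y z : Fin (n+1) → ℝ) :
    lip (x + y) z = lip x z + lip y z := by
  simp only [lip, Pi.add_apply, add_mul, Finset.sum_add_distrib]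
  ring

lemma lip_smul_left {n : ℕ} (c : ℝ) (x y : Fin (n+1) → ℝ) :
    lip (c • x) y = c * lip x y := by
  simp only [lip, Pi.smul_apply, smul_eq_mul, mul_assoc, ← Finset.mul_sum]
  ring

lemma lip_smul_right {n : ℕ} (c : ℝ) (x y : Fin (n+1) → ℝ) :
    lip x (c • y) = c * lip x y := by
  rw [lip_comm, lip_smul_left, lip_comm]

lemma lip_add_right {n : ℕ} (x y z : Fin (n+1) → ℝ) :
    lip x (y + z) = lip x y + lip x z := by
  rw [lip_comm, lip_add_left, lip_comm x y, lip_comm x z]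

lemma rev_cs {n : ℕ} {κ : ℝ} (hκ : 0 < κ) {p q : Fin (n+1) → ℝ}
    (hp : p ∈ Hyp κ) (hq : q ∈ Hyp κ) : 1 ≤ -(κ * lip p q) := by
  obtain ⟨hp1, hp2⟩ := hp
  obtain ⟨hq1, hq2⟩ := hq
  set P := p (Fin.last n) with hP
  set Q := q (Fin.last n) with hQ
  set Sp := ∑ i : Fin n, p i.castSucc * p i.castSucc with hSp
  set Sq := ∑ i : Fin n, q i.castSucc * q i.castSucc with hSq
  set S := ∑ i : Fin n, p i.castSucc * q i.castSucc with hS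
  have hCS : S ^ 2 ≤ Sp * Sq := by
    have := Finset.sum_mul_sq_le_sq_mul_sq Finset.univ
      (fun i : Fin n => p i.castSucc) (fun i : Fin n => q i.castSucc)
    simpa [hS, hSp, hSq, sq] using this
  have hSpnn : 0 ≤ Sp := Finset.sum_nonneg fun i _ => mul_self_nonneg _
  have hSqnn : 0 ≤ Sq := Finset.sum_nonneg fun i _ => mul_self_nonneg _
  have hp1' : Sp - P * P = -(1/κ) := by rw [← neg_div]; exact hp1
  have hq1' : Sq - Q * Q = -(1/κ) := by rw [← neg_div]; exact hq1
  have hc : (0:ℝ) < 1/κ := by positivity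
  have hP2 : 1/κ ≤ P * P := by linarith
  have hQ2 : 1/κ ≤ Q * Q := by linarith
  have h1 : (1/κ)*(1/κ) ≤ (P*P)*(Q*Q) := mul_le_mul hP2 hQ2 hc.le (by positivity)
  have hPQ : 1/κ ≤ P * Q := by nlinarith [mul_pos hp2 hq2, hc, h1]
  have hK : 0 ≤ P * Q - 1/κ := by linarith
  have hS2 : S^2 ≤ (P*Q - 1/κ)^2 := by
    nlinarith [hCS, mul_nonneg hc.le (sq_nonneg (P - Q))]
  have key : S ≤ P * Q - 1/κ := by nlinarith [hS2, hK]
  have hlip : lip p q = S - P * Q := rfl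
  have h2 : lip p q ≤ -(1/κ) := by rw [hlip]; linarith
  have h3 := mul_le_mul_of_nonneg_left h2 hκ.le
  have h4 : κ * (-(1/κ)) = -1 := by field_simp
  rw [h4] at h3
  linarith

lemma tangent_nonneg {n : ℕ} {κ : ℝ} (hκ : 0 < κ) {p v : Fin (n+1) → ℝ}
    (hp : p ∈ Hyp κ) (hv : lip p v = 0) : 0 ≤ lip v v := by
  obtain ⟨hp1, hp2⟩ := hp
  set P := p (Fin.last n) with hP
  set V := v (Fin.last n) with hV
  set Sp := ∑ i : Fin n, p i.castSucc * p i.castSucc with hSp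
  set Sv := ∑ i : Fin n, v i.castSucc * v i.castSucc with hSv
  set S := ∑ i : Fin n, p i.castSucc * v i.castSucc with hS
  have hCS : S ^ 2 ≤ Sp * Sv := by
    have := Finset.sum_mul_sq_le_sq_mul_sq Finset.univ
      (fun i : Fin n => p i.castSucc) (fun i : Fin n => v i.castSucc)
    simpa [hS, hSp, hSv, sq] using this
  have hSvnn : 0 ≤ Sv := Finset.sum_nonneg fun i _ => mul_self_nonneg _
  have hp1' : Sp - P * P = -(1/κ) := by rw [← neg_div]; exact hp1
  have hv' : S - P * V = 0 := hv
  have hc : (0:ℝ) < 1/κ := by positivity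
  have hPV : S = P * V := by linarith
  have hSp' : Sp = P * P - 1/κ := by linarith
  rw [hPV, hSp'] at hCS
  have hlip : lip v v = Sv - V * V := rfl
  rw [hlip]
  nlinarith [hCS, mul_nonneg hc.le hSvnn, mul_pos hp2 hp2]

lemma arcosh_nonneg {u : ℝ} (hu : 1 ≤ u) : 0 ≤ arcosh u :=
  Real.log_nonneg (by nlinarith [Real.sqrt_nonneg (u^2 - 1)])

lemma cosh_sinh_arcosh {u : ℝ} (hu : 1 ≤ u) :
    Real.cosh (arcosh u) = u ∧ Real.sinh (arcosh u) = Real.sqrt (u^2 - 1) := by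
  set s := Real.sqrt (u^2 - 1) with hs
  have hsnn : 0 ≤ s := Real.sqrt_nonneg _
  have hs2 : s^2 = u^2 - 1 := Real.sq_sqrt (by nlinarith)
  have hpos : 0 < u + s := by linarith
  have hmul : (u + s) * (u - s) = 1 := by nlinarith
  have hinv : (u + s)⁻¹ = u - s := inv_eq_of_mul_eq_one_right hmul
  constructor
  · rw [arcosh, ← hs, Real.cosh_log hpos, hinv]; ring
  · rw [arcosh, ← hs, Real.sinh_log hpos, hinv]; ring

lemma sinh_le_mul_cosh {x : ℝ} (hx : 0 ≤ x) : Real.sinh x ≤ x * Real.cosh x := by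
  set g : ℝ → ℝ := fun t => t * Real.cosh t - Real.sinh t with hg
  have hder : ∀ t : ℝ, HasDerivAt g (t * Real.sinh t) t := by
    intro t
    have h1 : HasDerivAt (fun t : ℝ => t * Real.cosh t)
        (1 * Real.cosh t + t * Real.sinh t) t :=
      (hasDerivAt_id t).mul (Real.hasDerivAt_cosh t)
    have := h1.sub (Real.hasDerivAt_sinh t)
    exact this.congr_deriv (by ring)
  have hmono : MonotoneOn g (Set.Ici (0:ℝ)) := by
    apply monotoneOn_of_deriv_nonneg (convex_Ici 0)
    · exact (Continuous.continuousOn (by continuity))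
    · intro t ht
      exact (hder t).differentiableAt.differentiableWithinAt
    · intro t ht
      rw [interior_Ici] at ht
      rw [(hder t).deriv]
      exact mul_nonneg (le_of_lt ht) ((Real.sinh_nonneg_iff.2 ht.le))
  have := hmono (Set.self_mem_Ici) (Set.mem_Ici.2 hx) hx
  simp only [hg] at this
  simp at this
  linarith [this]

lemma sinh_div_mono {a b : ℝ} (ha : 0 < a) (hab : a ≤ b) :
    Real.sinh a * b ≤ Real.sinh b * a := by
  have hb : 0 < b := lt_of_lt_of_le ha hab
  set f : ℝ → ℝ := fun t => Real.sinh t / t with hf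
  have hder : ∀ t : ℝ, t ≠ 0 →
      HasDerivAt f ((Real.cosh t * t - Real.sinh t * 1) / t^2) t := by
    intro t ht
    exact (Real.hasDerivAt_sinh t).div (hasDerivAt_id t) ht
  have hmono : MonotoneOn f (Set.Ioi (0:ℝ)) := by
    apply monotoneOn_of_deriv_nonneg (convex_Ioi 0)
    · apply ContinuousOn.div Real.continuous_sinh.continuousOn continuousOn_id
      intro t ht; exact ne_of_gt ht
    · intro t ht
      rw [interior_Ioi] at ht
      exact (hder t (ne_of_gt ht)).differentiableAt.differentiableWithinAt
    · intro t ht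
      rw [interior_Ioi] at ht
      rw [(hder t (ne_of_gt ht)).deriv]
      apply div_nonneg _ (sq_nonneg t)
      have := sinh_le_mul_cosh (le_of_lt ht)
      nlinarith [this]
  have := hmono (Set.mem_Ioi.2 ha) (Set.mem_Ioi.2 hb) hab
  simp only [hf] at this
  rw [div_le_div_iff₀ ha hb] at this
  linarith

lemma convexOn_cosh_sqrt : ConvexOn ℝ (Set.Ici (0:ℝ)) (fun s => Real.cosh (Real.sqrt s)) := by
  have hder : ∀ s : ℝ, 0 < s →
      HasDerivAt (fun s => Real.cosh (Real.sqrt s))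
        (Real.sinh (Real.sqrt s) * (1 / (2 * Real.sqrt s))) s := by
    intro s hs
    exact (Real.hasDerivAt_cosh (Real.sqrt s)).comp s (Real.hasDerivAt_sqrt (ne_of_gt hs))
  have hmono : MonotoneOn (deriv fun s => Real.cosh (Real.sqrt s)) (interior (Set.Ici (0:ℝ))) := by
    rw [interior_Ici]
    intro s₁ hs₁ s₂ hs₂ h12
    rw [Set.mem_Ioi] at hs₁ hs₂
    rw [(hder s₁ hs₁).deriv, (hder s₂ hs₂).deriv]
    set a := Real.sqrt s₁ with hadef
    set b := Real.sqrt s₂ with hbdef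
    have ha : 0 < a := Real.sqrt_pos.2 hs₁
    have hb : 0 < b := Real.sqrt_pos.2 hs₂
    have hab : a ≤ b := Real.sqrt_le_sqrt h12
    have key := sinh_div_mono ha hab
    rw [mul_one_div, mul_one_div, div_le_div_iff₀ (by positivity) (by positivity)]
    nlinarith [key]
  apply MonotoneOn.convexOn_of_deriv (convex_Ici 0)
  · exact (Real.continuous_cosh.comp Real.continuous_sqrt).continuousOn
  · intro s hs
    rw [interior_Ici] at hs
    exact (hder s hs).differentiableAt.differentiableWithinAt
  · exact hmono

lemma core_ineq {A B t : ℝ} (hA : 0 ≤ A) (hB : 0 ≤ B) (ht1 : -1 ≤ t) (ht2 : t ≤ 1) :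
    Real.cosh (Real.sqrt (A^2 + B^2 - 2*A*B*t)) ≤
      Real.cosh A * Real.cosh B - t * (Real.sinh A * Real.sinh B) := by
  have h1 : ((A-B)^2 : ℝ) ∈ Set.Ici (0:ℝ) := Set.mem_Ici.2 (sq_nonneg _)
  have h2 : ((A+B)^2 : ℝ) ∈ Set.Ici (0:ℝ) := Set.mem_Ici.2 (sq_nonneg _)
  have hl1 : (0:ℝ) ≤ (1+t)/2 := by linarith
  have hl2 : (0:ℝ) ≤ (1-t)/2 := by linarith
  have hsum : (1+t)/2 + (1-t)/2 = (1:ℝ) := by ring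
  have h := convexOn_cosh_sqrt.2 h1 h2 hl1 hl2 hsum
  simp only [smul_eq_mul] at h
  have harg : (1+t)/2 * (A-B)^2 + (1-t)/2 * (A+B)^2 = A^2 + B^2 - 2*A*B*t := by ring
  rw [harg] at h
  have e1 : Real.sqrt ((A-B)^2) = |A - B| := Real.sqrt_sq_eq_abs _
  have e2 : Real.sqrt ((A+B)^2) = A + B := Real.sqrt_sq (by linarith)
  rw [e1, e2, Real.cosh_abs, Real.cosh_sub, Real.cosh_add] at h
  calc Real.cosh (Real.sqrt (A^2 + B^2 - 2*A*B*t)) ≤ _ := h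
    _ = Real.cosh A * Real.cosh B - t * (Real.sinh A * Real.sinh B) := by ring

lemma lip_projT {n : ℕ} {κ : ℝ} (hκ' : κ ≠ 0) {x : Fin (n+1) → ℝ}
    (hxx : lip x x = -1/κ) (y z : Fin (n+1) → ℝ) :
    lip (projT κ x y) (projT κ x z) = lip y z + κ * lip x y * lip x z := by
  simp only [projT, lip_add_left, lip_add_right, lip_smul_left, lip_smul_right, hxx]
  rw [lip_comm y x]
  field_simp
  ring

lemma lip_x_projT {n : ℕ} {κ : ℝ} (hκ' : κ ≠ 0) {x : Fin (n+1) → ℝ}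
    (hxx : lip x x = -1/κ) (y : Fin (n+1) → ℝ) :
    lip x (projT κ x y) = 0 := by
  simp only [projT, lip_add_right, lip_smul_right, hxx]
  field_simp
  ring

lemma tangent_cs {n : ℕ} {κ : ℝ} (hκ : 0 < κ) {x : Fin (n+1) → ℝ} (hx : x ∈ Hyp κ)
    {v w : Fin (n+1) → ℝ} (hv : lip x v = 0) (hw : lip x w = 0) :
    (lip v w)^2 ≤ lip v v * lip w w := by
  have hquad : ∀ lam : ℝ, 0 ≤ lip w w * (lam*lam) + (2 * lip v w) * lam + lip v v := by
    intro lam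
    have h0 : lip x (v + lam • w) = 0 := by
      rw [lip_add_right, lip_smul_right, hv, hw]; ring
    have h1 := tangent_nonneg hκ hx h0
    have hexp : lip (v + lam • w) (v + lam • w)
        = lip w w * (lam*lam) + (2 * lip v w) * lam + lip v v := by
      simp only [lip_add_left, lip_add_right, lip_smul_left, lip_smul_right]
      rw [lip_comm w v]
      ring
    rwa [hexp] at h1
  have hd := discrim_le_zero hquad
  rw [discrim] at hd
  nlinarith [hd]

set_option maxHeartbeats 1000000 in
/-- Comparison inequality for triangles in the κ-hyperbolic space form. -/
theorem comparison_inequality {n : ℕ} (κ : ℝ) (hκ : 0 < κ)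
    (x y z : Fin (n+1) → ℝ) (hx : x ∈ Hyp κ) (hy : y ∈ Hyp κ) (hz : z ∈ Hyp κ) :
    dH κ x y ^ 2 + dH κ x z ^ 2 - 2 * lip (logH κ x y) (logH κ x z) ≤ dH κ y z ^ 2 := by
  have hκ' : κ ≠ 0 := ne_of_gt hκ
  have hsκ : 0 < Real.sqrt κ := Real.sqrt_pos.2 hκ
  set u := -(κ * lip x y) with hu_def
  set v := -(κ * lip x z) with hv_def
  set w := -(κ * lip y z) with hw_def
  have hu : 1 ≤ u := rev_cs hκ hx hy
  have hv : 1 ≤ v := rev_cs hκ hx hz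
  have hw : 1 ≤ w := rev_cs hκ hy hz
  clear_value u v w
  set A := arcosh u with hA_def
  set B := arcosh v with hB_def
  set C := arcosh w with hC_def
  have hA0 : 0 ≤ A := arcosh_nonneg hu
  have hB0 : 0 ≤ B := arcosh_nonneg hv
  have hC0 : 0 ≤ C := arcosh_nonneg hw
  have hcoshA : Real.cosh A = u := (cosh_sinh_arcosh hu).1
  have hcoshB : Real.cosh B = v := (cosh_sinh_arcosh hv).1
  have hcoshC : Real.cosh C = w := (cosh_sinh_arcosh hw).1
  have hsinhA : Real.sinh A = Real.sqrt (u^2 - 1) := (cosh_sinh_arcosh hu).2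
  have hsinhB : Real.sinh B = Real.sqrt (v^2 - 1) := (cosh_sinh_arcosh hv).2
  clear_value A B C
  have hdxy : dH κ x y = A / Real.sqrt κ := by
    simp only [dH]; rw [← hu_def, ← hA_def]; ring
  have hdxz : dH κ x z = B / Real.sqrt κ := by
    simp only [dH]; rw [← hv_def, ← hB_def]; ring
  have hdyz : dH κ y z = C / Real.sqrt κ := by
    simp only [dH]; rw [← hw_def, ← hC_def]; ring
  have hPyPy : lip (projT κ x y) (projT κ x y) = (u^2 - 1)/κ := by
    rw [lip_projT hκ' hx.1, hy.1, hu_def]; field_simp; ring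
  have hPzPz : lip (projT κ x z) (projT κ x z) = (v^2 - 1)/κ := by
    rw [lip_projT hκ' hx.1, hz.1, hv_def]; field_simp; ring
  have hPyPz : lip (projT κ x y) (projT κ x z) = (u*v - w)/κ := by
    rw [lip_projT hκ' hx.1, hu_def, hv_def, hw_def]; field_simp; ring
  have hu2 : (0:ℝ) ≤ u^2 - 1 := by
    have h := mul_le_mul hu hu (by norm_num) (by linarith)
    calc (0:ℝ) = 1*1 - 1 := by norm_num
      _ ≤ u*u - 1 := by linarith
      _ = u^2 - 1 := by ring
  have hv2 : (0:ℝ) ≤ v^2 - 1 := by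
    have h := mul_le_mul hv hv (by norm_num) (by linarith)
    calc (0:ℝ) = 1*1 - 1 := by norm_num
      _ ≤ v*v - 1 := by linarith
      _ = v^2 - 1 := by ring
  have hNy : lnorm (projT κ x y) = Real.sqrt (u^2-1) / Real.sqrt κ := by
    rw [lnorm, hPyPy, Real.sqrt_div hu2]
  have hNz : lnorm (projT κ x z) = Real.sqrt (v^2-1) / Real.sqrt κ := by
    rw [lnorm, hPzPz, Real.sqrt_div hv2]
  have hL : lip (logH κ x y) (logH κ x z)
      = (dH κ x y / lnorm (projT κ x y)) *
        ((dH κ x z / lnorm (projT κ x z)) * lip (projT κ x y) (projT κ x z)) := by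
    simp only [logH, lip_smul_left, lip_smul_right]; ring
  have hCS2 : (u*v - w)^2 ≤ (u^2 - 1) * (v^2 - 1) := by
    have h := tangent_cs hκ hx (lip_x_projT hκ' hx.1 y) (lip_x_projT hκ' hx.1 z)
    rw [hPyPz, hPyPy, hPzPz] at h
    have hκ2 : (0:ℝ) < κ^2 := by positivity
    calc (u*v - w)^2 = ((u*v-w)/κ)^2 * κ^2 := by field_simp
      _ ≤ ((u^2-1)/κ * ((v^2-1)/κ)) * κ^2 := mul_le_mul_of_nonneg_right h hκ2.le
      _ = (u^2-1)*(v^2-1) := by field_simp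
  by_cases hu1 : u = 1
  · have hAeq : A = 0 := by rw [hA_def, hu1]; unfold arcosh; norm_num
    have hwv : w = v := by
      rw [hu1] at hCS2
      have h0 : (v - w)^2 ≤ 0 := by
        calc (v - w)^2 = (1*v - w)^2 := by ring
          _ ≤ (1^2 - 1) * (v^2 - 1) := hCS2
          _ = 0 := by ring
      have h1 : (v - w)^2 = 0 := le_antisymm h0 (sq_nonneg _)
      have h2 : v - w = 0 := by
        exact pow_eq_zero_iff (by norm_num : (2:ℕ) ≠ 0) |>.1 h1
      linarith
    have hCB : C = B := by rw [hC_def, hwv, ← hB_def]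
    have hdxy0 : dH κ x y = 0 := by rw [hdxy, hAeq, zero_div]
    have hL0 : lip (logH κ x y) (logH κ x z) = 0 := by rw [hL, hdxy0]; simp
    rw [hdxy0, hL0, hdxz, hdyz, hCB]
    norm_num
  by_cases hv1 : v = 1
  · have hBeq : B = 0 := by rw [hB_def, hv1]; unfold arcosh; norm_num
    have hwu : w = u := by
      rw [hv1] at hCS2
      have h0 : (u - w)^2 ≤ 0 := by
        calc (u - w)^2 = (u*1 - w)^2 := by ring
          _ ≤ (u^2 - 1) * (1^2 - 1) := hCS2
          _ = 0 := by ring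
      have h1 : (u - w)^2 = 0 := le_antisymm h0 (sq_nonneg _)
      have h2 : u - w = 0 := by
        exact pow_eq_zero_iff (by norm_num : (2:ℕ) ≠ 0) |>.1 h1
      linarith
    have hCA : C = A := by rw [hC_def, hwu, ← hA_def]
    have hdxz0 : dH κ x z = 0 := by rw [hdxz, hBeq, zero_div]
    have hL0 : lip (logH κ x y) (logH κ x z) = 0 := by rw [hL, hdxz0]; simp
    rw [hdxz0, hL0, hdxy, hdyz, hCA]
    norm_num
  · have hu1' : 1 < u := lt_of_le_of_ne hu (Ne.symm hu1)
    have hv1' : 1 < v := lt_of_le_of_ne hv (Ne.symm hv1)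
    set su := Real.sqrt (u^2 - 1) with hsu_def
    set sv := Real.sqrt (v^2 - 1) with hsv_def
    have hsu : 0 < su := Real.sqrt_pos.2 (by
      have h := mul_lt_mul'' hu1' hu1' (by norm_num) (by norm_num)
      calc (0:ℝ) = 1*1 - 1 := by norm_num
        _ < u*u - 1 := by linarith
        _ = u^2 - 1 := by ring)
    have hsv : 0 < sv := Real.sqrt_pos.2 (by
      have h := mul_lt_mul'' hv1' hv1' (by norm_num) (by norm_num)
      calc (0:ℝ) = 1*1 - 1 := by norm_num
        _ < v*v - 1 := by linarith
        _ = v^2 - 1 := by ring)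
    have hsu2 : su^2 = u^2 - 1 := Real.sq_sqrt hu2
    have hsv2 : sv^2 = v^2 - 1 := Real.sq_sqrt hv2
    clear_value su sv
    set t := (u*v - w)/(su*sv) with ht_def
    clear_value t
    have hden : (0:ℝ) < su * sv := mul_pos hsu hsv
    have ht2 : t^2 ≤ 1 := by
      rw [ht_def, div_pow, div_le_one (by positivity)]
      calc (u*v - w)^2 ≤ (u^2-1)*(v^2-1) := hCS2
        _ = (su*sv)^2 := by rw [mul_pow, hsu2, hsv2]
    have htabs : |t| ≤ 1 := (sq_le_one_iff_abs_le_one t).1 ht2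
    have ht_ub : t ≤ 1 := (abs_le.1 htabs).2
    have ht_lb : -1 ≤ t := (abs_le.1 htabs).1
    have hwt : u*v - t*(su*sv) = w := by
      rw [ht_def]
      field_simp
      ring
    have hcore := core_ineq hA0 hB0 ht_lb ht_ub
    rw [hcoshA, hcoshB, hsinhA, hsinhB] at hcore
    rw [hwt] at hcore
    have hC5 : Real.cosh (Real.sqrt (A^2 + B^2 - 2*A*B*t)) ≤ Real.cosh C := by
      rw [hcoshC]; exact hcore
    have h6 : Real.sqrt (A^2 + B^2 - 2*A*B*t) ≤ C := by
      have h := Real.cosh_le_cosh.1 hC5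
      rwa [abs_of_nonneg (Real.sqrt_nonneg _), abs_of_nonneg hC0] at h
    have hab2 : 0 ≤ A^2 + B^2 - 2*(A*B) := by
      calc (0:ℝ) ≤ (A-B)^2 := sq_nonneg _
        _ = A^2 + B^2 - 2*(A*B) := by ring
    have habt : 2*(A*B)*t ≤ 2*(A*B) := by
      have h := mul_le_mul_of_nonneg_left ht_ub
        (by positivity : (0:ℝ) ≤ 2*(A*B))
      linarith
    have harg : (0:ℝ) ≤ A^2 + B^2 - 2*A*B*t := by
      have : 2*A*B*t = 2*(A*B)*t := by ring
      linarith [hab2, habt]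
    have h7 : A^2 + B^2 - 2*A*B*t ≤ C^2 := by
      calc A^2 + B^2 - 2*A*B*t = (Real.sqrt (A^2+B^2-2*A*B*t))^2 := (Real.sq_sqrt harg).symm
        _ ≤ C^2 := pow_le_pow_left₀ (Real.sqrt_nonneg _) h6 2
    have hfrac1 : dH κ x y / lnorm (projT κ x y) = A / su := by
      rw [hdxy, hNy]
      field_simp
    have hfrac2 : dH κ x z / lnorm (projT κ x z) = B / sv := by
      rw [hdxz, hNz]
      field_simp
    have hLval : lip (logH κ x y) (logH κ x z) = A*B*t/κ := by
      rw [hL, hfrac1, hfrac2, hPyPz, ht_def]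
      field_simp
    have e1 : (A / Real.sqrt κ)^2 = A^2/κ := by rw [div_pow, Real.sq_sqrt hκ.le]
    have e2 : (B / Real.sqrt κ)^2 = B^2/κ := by rw [div_pow, Real.sq_sqrt hκ.le]
    have e3 : (C / Real.sqrt κ)^2 = C^2/κ := by rw [div_pow, Real.sq_sqrt hκ.le]
    rw [hdxy, hdxz, hdyz, hLval, e1, e2, e3]
    have e : A^2/κ + B^2/κ - 2 * (A*B*t/κ) = (A^2 + B^2 - 2*A*B*t)/κ := by ring
    rw [e]
    exact div_le_div_of_nonneg_right h7 hκ.le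
end
end

section
/- Let C ⊆ ℍⁿ_κ be a closed κ-hyperbolically convex set, p ∈ C, v ∈ T_p ℍⁿ_κ with v ≠ 0, and α > 0. Then ⟨v, log_p P_C(exp_p(−α v))⟩ ≤ −(1/α)·d(p, P_C(exp_p(−α v)))². -/
noncomputable section

/-- A causal vector Lorentz-orthogonal to a timelike vector is zero. -/
lemma orth_null_eq_zero {n : ℕ} (z w : Fin (n+1) → ℝ) (hz : lip z z < 0)
    (ho : lip z w = 0) (hw : lip w w ≤ 0) : w = 0 := by
  set a := ∑ i : Fin n, z i.castSucc * w i.castSucc with ha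
  set A := ∑ i : Fin n, z i.castSucc * z i.castSucc with hA
  set B := ∑ i : Fin n, w i.castSucc * w i.castSucc with hB
  have hCS : a^2 ≤ A * B := by
    have := Finset.sum_mul_sq_le_sq_mul_sq Finset.univ
      (fun i : Fin n => z i.castSucc) (fun i : Fin n => w i.castSucc)
    simpa [ha, hA, hB, sq] using this
  have hA0 : 0 ≤ A := Finset.sum_nonneg fun i _ => mul_self_nonneg _
  have hB0 : 0 ≤ B := Finset.sum_nonneg fun i _ => mul_self_nonneg _
  have hz' : A - z (Fin.last n) * z (Fin.last n) < 0 := hz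
  have ho' : a - z (Fin.last n) * w (Fin.last n) = 0 := ho
  have hw' : B - w (Fin.last n) * w (Fin.last n) ≤ 0 := hw
  have e2 : A * B ≤ A * (w (Fin.last n) * w (Fin.last n)) :=
    mul_le_mul_of_nonneg_left (by linarith) hA0
  have ha' : a = z (Fin.last n) * w (Fin.last n) := by linarith
  have e3 : (z (Fin.last n) * w (Fin.last n)) * (z (Fin.last n) * w (Fin.last n))
      ≤ A * (w (Fin.last n) * w (Fin.last n)) := by
    calc (z (Fin.last n) * w (Fin.last n)) * (z (Fin.last n) * w (Fin.last n)) = a^2 := by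
          rw [ha']; ring
      _ ≤ A * B := hCS
      _ ≤ A * (w (Fin.last n) * w (Fin.last n)) := e2
  have e4 : w (Fin.last n) * w (Fin.last n) = 0 :=
    le_antisymm (by nlinarith [mul_self_nonneg (w (Fin.last n))]) (mul_self_nonneg _)
  have hwl : w (Fin.last n) = 0 := mul_self_eq_zero.mp e4
  have hB00 : B = 0 := le_antisymm (by linarith) hB0
  have hwi : ∀ j : Fin n, w j.castSucc = 0 := by
    intro j
    have h := (Finset.sum_eq_zero_iff_of_nonneg
      (fun i (_ : i ∈ (Finset.univ : Finset (Fin n))) => mul_self_nonneg (w i.castSucc))).mp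
      (by rw [← hB]; exact hB00)
    exact mul_self_eq_zero.mp (h j (Finset.mem_univ j))
  funext i
  rw [Pi.zero_apply]
  exact Fin.lastCases hwl hwi i

/-- Two timelike vectors with negative product: positive last coordinate propagates. -/
lemma last_pos_of {n : ℕ} (x y : Fin (n+1) → ℝ) (hx : lip x x < 0) (hy : lip y y < 0)
    (hxl : 0 < x (Fin.last n)) (hxy : lip x y < 0) : 0 < y (Fin.last n) := by
  set a := ∑ i : Fin n, x i.castSucc * y i.castSucc with ha
  set A := ∑ i : Fin n, x i.castSucc * x i.castSucc with hA
  set B := ∑ i : Fin n, y i.castSucc * y i.castSucc with hB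
  have hCS : a^2 ≤ A * B := by
    have := Finset.sum_mul_sq_le_sq_mul_sq Finset.univ
      (fun i : Fin n => x i.castSucc) (fun i : Fin n => y i.castSucc)
    simpa [ha, hA, hB, sq] using this
  have hA0 : 0 ≤ A := Finset.sum_nonneg fun i _ => mul_self_nonneg _
  have hB0 : 0 ≤ B := Finset.sum_nonneg fun i _ => mul_self_nonneg _
  have hx' : A - x (Fin.last n) * x (Fin.last n) < 0 := hx
  have hy' : B - y (Fin.last n) * y (Fin.last n) < 0 := hy
  have hxy' : a - x (Fin.last n) * y (Fin.last n) < 0 := hxy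
  by_contra h
  push_neg at h
  have h0 : x (Fin.last n) * y (Fin.last n) ≤ 0 :=
    mul_nonpos_of_nonneg_of_nonpos hxl.le h
  have haneg : a < 0 := by linarith
  have h3 : (x (Fin.last n) * y (Fin.last n)) * (x (Fin.last n) * y (Fin.last n)) < a * a := by
    nlinarith [mul_pos_of_neg_of_neg (show a - x (Fin.last n) * y (Fin.last n) < 0 by linarith)
      (show a + x (Fin.last n) * y (Fin.last n) < 0 by linarith)]
  have h1 : A * B ≤ (x (Fin.last n) * x (Fin.last n)) * B :=
    mul_le_mul_of_nonneg_right (by linarith) hB0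
  have h2 : (x (Fin.last n) * x (Fin.last n)) * B
      ≤ (x (Fin.last n) * x (Fin.last n)) * (y (Fin.last n) * y (Fin.last n)) :=
    mul_le_mul_of_nonneg_left (by linarith) (mul_pos hxl hxl).le
  nlinarith [hCS]

/-- Reverse Cauchy–Schwarz on the hyperboloid. -/
lemma revCS {n : ℕ} (κ : ℝ) (hκ : 0 < κ) (x y : Fin (n+1) → ℝ)
    (hx : lip x x = -1/κ) (hy : lip y y = -1/κ)
    (hxl : 0 < x (Fin.last n)) (hyl : 0 < y (Fin.last n)) : lip x y ≤ -1/κ := by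
  rw [neg_div] at hx hy ⊢
  set a := ∑ i : Fin n, x i.castSucc * y i.castSucc with ha
  set A := ∑ i : Fin n, x i.castSucc * x i.castSucc with hA
  set B := ∑ i : Fin n, y i.castSucc * y i.castSucc with hB
  have hCS : a^2 ≤ A * B := by
    have := Finset.sum_mul_sq_le_sq_mul_sq Finset.univ
      (fun i : Fin n => x i.castSucc) (fun i : Fin n => y i.castSucc)
    simpa [ha, hA, hB, sq] using this
  have hA0 : 0 ≤ A := Finset.sum_nonneg fun i _ => mul_self_nonneg _
  have hB0 : 0 ≤ B := Finset.sum_nonneg fun i _ => mul_self_nonneg _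
  have hx' : A - x (Fin.last n) * x (Fin.last n) = -(1/κ) := hx
  have hy' : B - y (Fin.last n) * y (Fin.last n) = -(1/κ) := hy
  have hc : 0 < 1/κ := by positivity
  have hsx : Real.sqrt (1/κ) ≤ x (Fin.last n) := by
    rw [show x (Fin.last n) = Real.sqrt (x (Fin.last n)^2) from (Real.sqrt_sq hxl.le).symm]
    exact Real.sqrt_le_sqrt (by nlinarith)
  have hsy : Real.sqrt (1/κ) ≤ y (Fin.last n) := by
    rw [show y (Fin.last n) = Real.sqrt (y (Fin.last n)^2) from (Real.sqrt_sq hyl.le).symm]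
    exact Real.sqrt_le_sqrt (by nlinarith)
  have hxyl : 1/κ ≤ x (Fin.last n) * y (Fin.last n) := by
    calc 1/κ = Real.sqrt (1/κ) * Real.sqrt (1/κ) := (Real.mul_self_sqrt hc.le).symm
      _ ≤ x (Fin.last n) * y (Fin.last n) :=
        mul_le_mul hsx hsy (Real.sqrt_nonneg _) hxl.le
  have key : a ≤ x (Fin.last n) * y (Fin.last n) - 1/κ := by
    have h1 : a ≤ Real.sqrt (A * B) := by
      calc a ≤ |a| := le_abs_self a
        _ = Real.sqrt (a^2) := (Real.sqrt_sq_eq_abs a).symm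
        _ ≤ Real.sqrt (A * B) := Real.sqrt_le_sqrt hCS
    have eA : A = x (Fin.last n) * x (Fin.last n) - 1/κ := by linarith
    have eB : B = y (Fin.last n) * y (Fin.last n) - 1/κ := by linarith
    have h2 : Real.sqrt (A * B) ≤ x (Fin.last n) * y (Fin.last n) - 1/κ := by
      rw [eA, eB]
      have hle : (x (Fin.last n) * x (Fin.last n) - 1/κ) *
          (y (Fin.last n) * y (Fin.last n) - 1/κ)
          ≤ (x (Fin.last n) * y (Fin.last n) - 1/κ)^2 := by
        nlinarith [sq_nonneg (x (Fin.last n) - y (Fin.last n))]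
      calc Real.sqrt ((x (Fin.last n) * x (Fin.last n) - 1/κ) *
            (y (Fin.last n) * y (Fin.last n) - 1/κ))
          ≤ Real.sqrt ((x (Fin.last n) * y (Fin.last n) - 1/κ)^2) := Real.sqrt_le_sqrt hle
        _ = |x (Fin.last n) * y (Fin.last n) - 1/κ| := Real.sqrt_sq_eq_abs _
        _ = x (Fin.last n) * y (Fin.last n) - 1/κ := abs_of_nonneg (by linarith)
    linarith
  show a - x (Fin.last n) * y (Fin.last n) ≤ -(1/κ)
  linarith

lemma sq_sub_one_nonneg {x : ℝ} (hx : 1 ≤ x) : 0 ≤ x^2 - 1 := by nlinarith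

lemma exp_arcosh {x : ℝ} (hx : 1 ≤ x) : Real.exp (arcosh x) = x + Real.sqrt (x^2 - 1) := by
  apply Real.exp_log
  have := Real.sqrt_nonneg (x^2 - 1)
  linarith

lemma exp_neg_arcosh {x : ℝ} (hx : 1 ≤ x) : Real.exp (-arcosh x) = x - Real.sqrt (x^2 - 1) := by
  have hs : Real.sqrt (x^2-1) ^ 2 = x^2 - 1 := Real.sq_sqrt (sq_sub_one_nonneg hx)
  rw [Real.exp_neg, exp_arcosh hx]
  exact inv_eq_of_mul_eq_one_right (by nlinarith [hs])

lemma cosh_arcosh {x : ℝ} (hx : 1 ≤ x) : Real.cosh (arcosh x) = x := by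
  rw [Real.cosh_eq, exp_arcosh hx, exp_neg_arcosh hx]; ring

lemma sinh_arcosh {x : ℝ} (hx : 1 ≤ x) : Real.sinh (arcosh x) = Real.sqrt (x^2 - 1) := by
  rw [Real.sinh_eq, exp_arcosh hx, exp_neg_arcosh hx]; ring

lemma arcosh_nonneg_s5 {x : ℝ} (hx : 1 ≤ x) : 0 ≤ arcosh x := by
  apply Real.log_nonneg
  have := Real.sqrt_nonneg (x^2 - 1); linarith

lemma arcosh_pos {x : ℝ} (hx : 1 < x) : 0 < arcosh x := by
  apply Real.log_pos
  have := Real.sqrt_nonneg (x^2 - 1); linarith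

lemma arcosh_one : arcosh 1 = 0 := by simp [arcosh]

lemma sinh_pos_of_pos {x : ℝ} (hx : 0 < x) : 0 < Real.sinh x := by
  have h := Real.sinh_lt_sinh.mpr hx
  rwa [Real.sinh_zero] at h

lemma sinh_ratio {w u : ℝ} (hw : 0 ≤ w) (hwu : w ≤ u) : u * Real.sinh w ≤ w * Real.sinh u := by
  have hmono : MonotoneOn (fun x : ℝ => w * Real.sinh x - x * Real.sinh w) (Set.Ici w) := by
    apply monotoneOn_of_deriv_nonneg (convex_Ici w)
    · fun_prop
    · apply Differentiable.differentiableOn; fun_prop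
    · intro x hx
      rw [interior_Ici] at hx
      have hd : HasDerivAt (fun x : ℝ => w * Real.sinh x - x * Real.sinh w)
          (w * Real.cosh x - 1 * Real.sinh w) x :=
        ((Real.hasDerivAt_sinh x).const_mul w).sub ((hasDerivAt_id x).mul_const (Real.sinh w))
      rw [hd.deriv]
      have hcw : Real.cosh w ≤ Real.cosh x := by
        rw [Real.cosh_le_cosh, abs_of_nonneg hw, abs_of_nonneg (hw.trans hx.le)]
        exact hx.le
      have h1 : Real.sinh w ≤ w * Real.cosh w := sinh_le_mul_cosh hw
      have h2 : w * Real.cosh w ≤ w * Real.cosh x := mul_le_mul_of_nonneg_left hcw hw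
      linarith
  have := hmono (Set.self_mem_Ici) (Set.mem_Ici.mpr hwu) hwu
  simp at this
  linarith

lemma key_ineq {t s : ℝ} (ht : 0 ≤ t) (hts : t ≤ s) :
    t * Real.sinh s * Real.cosh t ≤ s * Real.sinh t * Real.cosh s := by
  have h := sinh_ratio (w := s - t) (u := s + t) (by linarith) (by linarith)
  rw [Real.sinh_sub, Real.sinh_add] at h
  nlinarith [h]

lemma lip_zero_right {n : ℕ} (x : Fin (n+1) → ℝ) : lip x 0 = 0 := by
  have := lip_smul_right (0:ℝ) x 0
  simpa using this

set_option maxHeartbeats 2000000 in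
/-- Key inequality for the gradient projection method: for p ∈ C, v ≠ 0 tangent at p
and α > 0, ⟨v, log_p P_C(exp_p(−αv))⟩ ≤ −(1/α)·d(p, P_C(exp_p(−αv)))². -/
theorem projection_descent_inequality {n : ℕ} (κ : ℝ) (hκ : 0 < κ)
    (C : Set (Fin (n+1) → ℝ)) (hC : C ⊆ Hyp κ) (hCc : IsClosed C)
    (hconv : Convex ℝ (coneOf C))
    (p v : Fin (n+1) → ℝ) (hp : p ∈ C) (hv0 : v ≠ 0) (hv : lip p v = 0)
    (α : ℝ) (hα : 0 < α)
    (z : Fin (n+1) → ℝ) (hzmem : z ∈ C)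
    (hzmin : ∀ y ∈ C, dH κ (expH κ p (-(α • v))) z ≤ dH κ (expH κ p (-(α • v))) y)
    (hzvar : ∀ y ∈ C,
      lip (logH κ z (expH κ p (-(α • v)))) (logH κ z y) ≤ 0) :
    lip v (logH κ p z) ≤ -(1/α) * dH κ p z ^ 2 := by
  obtain ⟨hpp, hpl⟩ := hC hp
  obtain ⟨hzz, hzl⟩ := hC hzmem
  have hκs : 0 < Real.sqrt κ := Real.sqrt_pos.mpr hκ
  have hppneg : lip p p < 0 := by rw [hpp, neg_div]; exact neg_lt_zero.mpr (by positivity)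
  have hzzneg : lip z z < 0 := by rw [hzz, neg_div]; exact neg_lt_zero.mpr (by positivity)
  have hvv : 0 < lip v v := by
    rcases lt_or_ge 0 (lip v v) with h|h
    · exact h
    · exact absurd (orth_null_eq_zero p v hppneg hv h) hv0
  set N := Real.sqrt (lip v v) with hNdef
  have hN0 : 0 < N := Real.sqrt_pos.mpr hvv
  have hN2 : N^2 = lip v v := Real.sq_sqrt hvv.le
  clear_value N
  set s := Real.sqrt κ * (α * N) with hsdef
  have hs0 : 0 < s := by positivity
  have hs2 : s^2 = κ * α^2 * N^2 := by
    rw [hsdef, mul_pow, mul_pow, Real.sq_sqrt hκ.le]; ring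
  clear_value s
  have hlnv : lip (-(α • v)) (-(α • v)) = α^2 * lip v v := by
    rw [show -(α • v) = (-α) • v from (neg_smul α v).symm, lip_smul_left, lip_smul_right]; ring
  have hlnw : lnorm (-(α • v)) = α * N := by
    rw [lnorm, hlnv, show α^2 * lip v v = (α*N)^2 by rw [← hN2]; ring,
      Real.sqrt_sq (by positivity)]
  set q := expH κ p (-(α • v)) with hqdef
  have hsq : Real.sqrt κ * lnorm (-(α • v)) = s := by rw [hlnw, hsdef]
  have hqe : q = Real.cosh s • p + (-(Real.sinh s / s * α)) • v := by
    rw [hqdef, expH, hsq]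
    module
  clear_value q
  have hvp : lip v p = 0 := by rw [lip_comm]; exact hv
  have hpq : lip p q = -(Real.cosh s) / κ := by
    rw [hqe, lip_add_right, lip_smul_right, lip_smul_right, hpp, hv]; ring
  have hvq : lip v q = -(Real.sinh s / s * α) * lip v v := by
    rw [hqe, lip_add_right, lip_smul_right, lip_smul_right, hvp, lip_comm v v]; ring
  have hvvval : lip v v = s^2/(κ * α^2) := by
    rw [hs2, ← hN2]; field_simp
  have hqq : lip q q = -1/κ := by
    rw [hqe, lip_add_left, lip_smul_left, lip_smul_left, lip_add_right, lip_add_right,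
      lip_smul_right, lip_smul_right, lip_smul_right, lip_smul_right, hpp, hv, hvp, hvvval]
    have hch := Real.cosh_sq_sub_sinh_sq s
    field_simp
    linear_combination (-s) * hch
  have hqqneg : lip q q < 0 := by rw [hqq, neg_div]; exact neg_lt_zero.mpr (by positivity)
  have hpqneg : lip p q < 0 := by
    rw [hpq]
    have := Real.cosh_pos s
    exact div_neg_of_neg_of_pos (by linarith) hκ
  have hql : 0 < q (Fin.last n) := last_pos_of p q hppneg hqqneg hpl hpqneg
  -- μ and t
  have hpzle : lip p z ≤ -1/κ := revCS κ hκ p z hpp hzz hpl hzl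
  set μ := -(κ * lip p z) with hμdef
  clear_value μ
  have hμ1 : 1 ≤ μ := by
    rw [hμdef]
    have h := mul_le_mul_of_nonneg_left hpzle hκ.le
    rw [show κ * (-1/κ) = -1 by field_simp] at h
    linarith
  have hμ0 : 0 < μ := by linarith
  set t := arcosh μ with htdef
  clear_value t
  have ht0 : 0 ≤ t := by rw [htdef]; exact arcosh_nonneg_s5 hμ1
  have hcosht : Real.cosh t = μ := by rw [htdef]; exact cosh_arcosh hμ1
  have hpzval : lip p z = -μ/κ := by rw [hμdef]; field_simp
  have hdpz : dH κ p z = t / Real.sqrt κ := by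
    rw [dH, ← hμdef, ← htdef]; ring
  rcases eq_or_lt_of_le hμ1 with hμeq | hμgt
  · -- degenerate case: z is at distance 0 from p
    have hd0 : dH κ p z = 0 := by
      rw [hdpz, htdef, ← hμeq, arcosh_one, zero_div]
    rw [logH, hd0]
    simp [lip_smul_right, lip_zero_right]
  · -- main case
    have htpos : 0 < t := by rw [htdef]; exact arcosh_pos hμgt
    set σ := Real.sinh t with hσdef
    clear_value σ
    have hσ0 : 0 < σ := by rw [hσdef]; exact sinh_pos_of_pos htpos
    have hσ2 : σ^2 = μ^2 - 1 := by
      have := Real.cosh_sq_sub_sinh_sq t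
      rw [hcosht] at this; rw [hσdef]; linarith
    have hPz : projT κ p z = z + (-μ) • p := by
      rw [projT, show κ * lip p z = -μ by rw [hμdef]; ring]
    have hvPz : lip v (projT κ p z) = lip v z := by
      rw [hPz, lip_add_right, lip_smul_right, hvp]; ring
    have hPzPz : lip (projT κ p z) (projT κ p z) = (μ^2 - 1)/κ := by
      rw [hPz, lip_add_left, lip_add_right, lip_add_right, lip_smul_left, lip_smul_left,
        lip_smul_right, lip_smul_right, hzz, hpp, hpzval, lip_comm z p, hpzval]
      field_simp; ring
    have hlnPz : lnorm (projT κ p z) = σ / Real.sqrt κ := by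
      rw [lnorm, hPzPz, show (μ^2-1)/κ = (σ / Real.sqrt κ)^2 by
        rw [div_pow, Real.sq_sqrt hκ.le, hσ2], Real.sqrt_sq (by positivity)]
    have hco : (t / Real.sqrt κ) / (σ / Real.sqrt κ) = t / σ := by
      rw [div_div_div_cancel_right₀]
      exact hκs.ne'
    have hlog : lip v (logH κ p z) = (t/σ) * lip v z := by
      rw [logH, lip_smul_right, hvPz, hdpz, hlnPz, hco]
    -- ρ and the variational inequality
    have hqzle : lip z q ≤ -1/κ := revCS κ hκ z q hzz hqq hzl hql
    set ρ := -(κ * lip z q) with hρdef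
    clear_value ρ
    have hρ1 : 1 ≤ ρ := by
      rw [hρdef]
      have h := mul_le_mul_of_nonneg_left hqzle hκ.le
      rw [show κ * (-1/κ) = -1 by field_simp] at h
      linarith
    have hzqval : lip z q = -ρ/κ := by rw [hρdef]; field_simp
    have hqzval : lip q z = -ρ/κ := by rw [lip_comm]; exact hzqval
    have hzpval : lip z p = -μ/κ := by rw [lip_comm]; exact hpzval
    have hPq : projT κ z q = q + (-ρ) • z := by
      rw [projT, show κ * lip z q = -ρ by rw [hρdef]; ring]
    have hPqPq : lip (projT κ z q) (projT κ z q) = (ρ^2 - 1)/κ := by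
      rw [hPq, lip_add_left, lip_add_right, lip_add_right, lip_smul_left, lip_smul_left,
        lip_smul_right, lip_smul_right, hqq, hzz, hzqval, lip_comm q z, hzqval]
      field_simp; ring
    have hPp : projT κ z p = p + (-μ) • z := by
      rw [projT, show κ * lip z p = -μ by rw [hzpval]; field_simp]
    have hPpPp : lip (projT κ z p) (projT κ z p) = (μ^2 - 1)/κ := by
      rw [hPp, lip_add_left, lip_add_right, lip_add_right, lip_smul_left, lip_smul_left,
        lip_smul_right, lip_smul_right, hpp, hzz, hzpval, lip_comm p z, hzpval]
      field_simp; ring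
    have hlnPp : lnorm (projT κ z p) = σ / Real.sqrt κ := by
      rw [lnorm, hPpPp, show (μ^2-1)/κ = (σ / Real.sqrt κ)^2 by
        rw [div_pow, Real.sq_sqrt hκ.le, hσ2], Real.sqrt_sq (by positivity)]
    have hdzp : dH κ z p = t / Real.sqrt κ := by
      rw [dH, hzpval, show -(κ * (-μ/κ)) = μ by field_simp, ← htdef]; ring
    have hdzq : dH κ z q = arcosh ρ / Real.sqrt κ := by
      rw [dH, hzqval, show -(κ * (-ρ/κ)) = ρ by field_simp]; ring
    -- the key inequality E
    have hE : lip q p - μ * lip q z ≤ 0 := by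
      rcases eq_or_lt_of_le hρ1 with hρeq | hρgt
      · -- ρ = 1 forces q = z
        have hzero : lip z (projT κ z q) = 0 := by
          rw [hPq, lip_add_right, lip_smul_right, hzqval, hzz]; field_simp; ring
        have hnull : lip (projT κ z q) (projT κ z q) ≤ 0 := by
          rw [hPqPq, ← hρeq]; norm_num
        have hP0 : projT κ z q = 0 := orth_null_eq_zero z _ hzzneg hzero hnull
        have hqz : q = z := by
          have h1 : q + (-ρ) • z = 0 := by rw [← hPq]; exact hP0
          have h2 : q = ρ • z := by
            have := congrArg (fun w => w + ρ • z) h1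
            simpa [add_assoc, add_smul, neg_smul] using this
          rw [h2, ← hρeq, one_smul]
        rw [hqz, lip_comm z p, hpzval, hzz]
        linarith [show -μ/κ - μ * (-1/κ) = (0:ℝ) from by ring]
      · -- use the variational inequality at y = p
        have hrpos : 0 < arcosh ρ := arcosh_pos hρgt
        have hτ0 : 0 < Real.sinh (arcosh ρ) := sinh_pos_of_pos hrpos
        have hτ2 : Real.sinh (arcosh ρ)^2 = ρ^2 - 1 := by
          have h := Real.cosh_sq_sub_sinh_sq (arcosh ρ)
          rw [cosh_arcosh hρ1] at h; linarith
        have hlnPq : lnorm (projT κ z q) = Real.sinh (arcosh ρ) / Real.sqrt κ := by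
          rw [lnorm, hPqPq, show (ρ^2-1)/κ = (Real.sinh (arcosh ρ) / Real.sqrt κ)^2 by
            rw [div_pow, Real.sq_sqrt hκ.le, hτ2], Real.sqrt_sq (by positivity)]
        have hvar := hzvar p hp
        simp only [logH] at hvar
        rw [lip_smul_left, lip_smul_right, hdzq, hdzp, hlnPq, hlnPp] at hvar
        have hc1 : (arcosh ρ / Real.sqrt κ) / (Real.sinh (arcosh ρ) / Real.sqrt κ)
            = arcosh ρ / Real.sinh (arcosh ρ) := by
          rw [div_div_div_cancel_right₀]
          exact hκs.ne'
        rw [hc1, hco] at hvar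
        have hPqPp : lip (projT κ z q) (projT κ z p) ≤ 0 := by
          by_contra hX
          push_neg at hX
          have h := mul_pos (mul_pos (div_pos hrpos hτ0) (div_pos htpos hσ0)) hX
          rw [mul_assoc] at h
          exact absurd hvar (not_le.mpr h)
        rw [hPq, hPp, lip_add_left, lip_add_right, lip_add_right, lip_smul_left,
          lip_smul_left, lip_smul_right, lip_smul_right, hzz, hzpval] at hPqPp
        -- hPqPp : lip q p + (-μ)*lip q z + (-ρ)*(-μ/κ) + (-ρ)*((-μ)*(-1/κ)) ≤ 0
        have hcancel : (-ρ) * (-μ/κ) + (-ρ) * ((-μ) * (-1/κ)) = 0 := by ring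
        linarith only [hPqPp, hcancel]
    -- from E : t ≤ s
    have hqpval : lip q p = -(Real.cosh s)/κ := by rw [lip_comm]; exact hpq
    have hts : t ≤ s := by
      have hE2 : (μ * ρ - Real.cosh s)/κ ≤ 0 := by
        have heq : lip q p - μ * lip q z = (μ * ρ - Real.cosh s)/κ := by
          rw [hqpval, hqzval]; field_simp; ring
        have hE' := hE
        rw [heq] at hE'
        exact hE'
      rw [div_le_iff₀ hκ, zero_mul] at hE2
      have hcoshts : Real.cosh t ≤ Real.cosh s := by
        rw [hcosht]
        have hprod : 0 ≤ μ * (ρ - 1) := mul_nonneg hμ0.le (by linarith only [hρ1])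
        linarith only [hE2, hprod]
      have h2 := Real.cosh_le_cosh.mp hcoshts
      rwa [abs_of_nonneg ht0, abs_of_nonneg hs0.le] at h2
    -- bound on lip v z from E
    have hbound : κ * (μ * (Real.sinh s * (α * lip v z))) ≤ -(s * (Real.cosh s * σ^2)) := by
      rw [hσ2]
      have hqzexp : lip q z = Real.cosh s * (-μ/κ) + -(Real.sinh s / s * α) * lip v z := by
        rw [hqe, lip_add_left, lip_smul_left, lip_smul_left, hpzval]
      have hEfrac : lip q p - μ * lip q z =
          (κ * (μ * (Real.sinh s * (α * lip v z))) + μ^2 * (s * Real.cosh s)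
            - s * Real.cosh s)/(κ*s) := by
        rw [hqpval, hqzexp]
        field_simp
        ring
      have hE3 := hE
      rw [hEfrac, div_le_iff₀ (by positivity), zero_mul] at hE3
      linarith only [hE3]
    -- finish
    rw [hlog, hdpz]
    have hrhs : -(1/α) * (t / Real.sqrt κ)^2 = -(t^2)/(α*κ) := by
      rw [div_pow, Real.sq_sqrt hκ.le]; ring
    rw [hrhs, div_mul_eq_mul_div, div_le_div_iff₀ hσ0 (by positivity : (0:ℝ) < α*κ)]
    -- goal : t * lip v z * (α*κ) ≤ -t^2 * σ
    have hkey := key_ineq ht0 hts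
    rw [hcosht, ← hσdef] at hkey
    -- hkey : t * Real.sinh s * μ ≤ s * σ * Real.cosh s
    have hshs : 0 < Real.sinh s := sinh_pos_of_pos hs0
    have F1 := mul_le_mul_of_nonneg_left hbound ht0
    have F2 := mul_le_mul_of_nonneg_left hkey (mul_nonneg ht0 hσ0.le)
    have F3 : 0 < μ * Real.sinh s := mul_pos hμ0 hshs
    have hsum : (μ * Real.sinh s) * (t * lip v z * (α*κ) + t^2*σ) ≤ (μ * Real.sinh s) * 0 := by
      rw [mul_zero]
      nlinarith only [F1, F2]
    have hfinal := le_of_mul_le_mul_left hsum F3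
    linarith only [hfinal]
end
end

section
/- Let K ⊆ ℝ^{n+1} be a convex cone. Then y is a Lorentz projection of x into K if and only if y ∈ K, Jy − Jx belongs to the dual cone of K, and (Jy − Jx)ᵀ y = 0; i.e., y solves the linear cone-complementarity problem LCP(−Jx, J, K̄). -/
noncomputable section

lemma lip_eq_edot {n : ℕ} (a b : Fin (n+1) → ℝ) : lip a b = edot (Jm a) b := by
  unfold lip edot Jm
  rw [Fin.sum_univ_castSucc]
  have h : ∀ i : Fin n, (i.castSucc : Fin (n+1)) ≠ Fin.last n :=
    fun i => (Fin.castSucc_lt_last i).ne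
  simp only [h, if_false, if_true, eq_self_iff_true]
  ring

lemma Jm_sub {n : ℕ} (a b : Fin (n+1) → ℝ) : Jm (a - b) = Jm a - Jm b := by
  funext i
  simp only [Jm, Pi.sub_apply]
  split <;> ring

lemma edot_sub_left {n : ℕ} (a b c : Fin (n+1) → ℝ) :
    edot (a - b) c = edot a c - edot b c := by
  simp [edot, sub_mul, Finset.sum_sub_distrib]

lemma edot_sub_right {n : ℕ} (a b c : Fin (n+1) → ℝ) :
    edot a (b - c) = edot a b - edot a c := by
  simp [edot, mul_sub, Finset.sum_sub_distrib]

lemma edot_smul_right {n : ℕ} (t : ℝ) (a b : Fin (n+1) → ℝ) :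
    edot a (t • b) = t * edot a b := by
  simp [edot, Finset.mul_sum, mul_comm, mul_assoc, mul_left_comm]

lemma key_lip {n : ℕ} (x y z : Fin (n+1) → ℝ) :
    lip (x - y) (z - y) = -(edot (Jm y - Jm x) z - edot (Jm y - Jm x) y) := by
  rw [lip_eq_edot, Jm_sub, edot_sub_right]
  simp only [edot_sub_left]
  ring

/-- main -/
theorem lorentz_projection_iff_LCP {n : ℕ}
    (K : Set (Fin (n+1) → ℝ)) (hconv : Convex ℝ K)
    (hcone : ∀ t : ℝ, 0 < t → ∀ z ∈ K, t • z ∈ K)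
    (x y : Fin (n+1) → ℝ) :
    (y ∈ K ∧ ∀ z ∈ K, lip (x - y) (z - y) ≤ 0) ↔
      (y ∈ K ∧ (∀ v ∈ K, 0 ≤ edot (Jm y - Jm x) v) ∧ edot (Jm y - Jm x) y = 0) := by
  constructor
  · rintro ⟨hy, h⟩
    have hE : ∀ z ∈ K, 0 ≤ edot (Jm y - Jm x) z - edot (Jm y - Jm x) y := by
      intro z hz
      have := h z hz
      rw [key_lip] at this
      linarith
    have h2 : (2:ℝ) • y ∈ K := hcone 2 (by norm_num) y hy
    have hh : (1/2:ℝ) • y ∈ K := hcone (1/2) (by norm_num) y hy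
    have e2 := hE _ h2
    have eh := hE _ hh
    rw [edot_smul_right] at e2 eh
    have hzero : edot (Jm y - Jm x) y = 0 := by linarith
    refine ⟨hy, fun v hv => ?_, hzero⟩
    have := hE v hv
    linarith
  · rintro ⟨hy, hdual, hzero⟩
    refine ⟨hy, fun z hz => ?_⟩
    rw [key_lip, hzero]
    have := hdual z hz
    linarith
end
end

section
/- Let C ⊆ ℍⁿ_κ be a closed κ-hyperbolically convex set, p ∈ ℍⁿ_κ, and v ∈ C. Then v = P_C(p) if and only if −κ⟨p,v⟩v is a nonzero Lorentz projection of p into the cone K_C spanned by C. In particular, the set of nonzero Lorentz projections of p into K_C is nonempty. -/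
noncomputable section

lemma lip_sub_left {n : ℕ} (x y z : Fin (n+1) → ℝ) :
    lip (x - y) z = lip x z - lip y z := by
  simp [lip, sub_mul, Finset.sum_sub_distrib]; ring

lemma lip_sub_right {n : ℕ} (x y z : Fin (n+1) → ℝ) :
    lip x (y - z) = lip x y - lip x z := by
  rw [lip_comm, lip_sub_left, lip_comm y x, lip_comm z x]

lemma quad_coeff_nonneg (a b : ℝ)
    (h : ∀ s : ℝ, 0 < s → s ≤ 1 → 0 ≤ a * s^2 + b * s) : 0 ≤ b := by
  by_contra hb
  push_neg at hb
  have hden : (0:ℝ) < |a| + 1 := by positivity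
  have h1 : 0 < -b / (|a| + 1) := div_pos (by linarith) hden
  set s := min 1 (-b / (|a| + 1)) with hs
  have hs0 : 0 < s := lt_min one_pos h1
  have hs1 : s ≤ 1 := min_le_left _ _
  have h2 : a * s ≤ |a| * s := mul_le_mul_of_nonneg_right (le_abs_self a) hs0.le
  have h3 : |a| * s ≤ |a| * (-b / (|a| + 1)) :=
    mul_le_mul_of_nonneg_left (min_le_right _ _) (abs_nonneg a)
  have h4 : |a| * (-b / (|a| + 1)) < -b := by
    rw [mul_div_assoc'] -- |a| * -b / (|a|+1)
    rw [div_lt_iff₀ hden]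
    nlinarith [abs_nonneg a]
  have h5 := h s hs0 hs1
  nlinarith

lemma hyp_lip_le {n : ℕ} {κ : ℝ} (hκ : 0 < κ) {x y : Fin (n+1) → ℝ}
    (hx : x ∈ Hyp κ) (hy : y ∈ Hyp κ) : lip x y ≤ -1/κ := by
  obtain ⟨hx1, hx2⟩ := hx
  obtain ⟨hy1, hy2⟩ := hy
  set A := ∑ i : Fin n, x i.castSucc ^ 2 with hA'
  set B := ∑ i : Fin n, y i.castSucc ^ 2 with hB'
  set S := ∑ i : Fin n, x i.castSucc * y i.castSucc with hS'
  have hA : 0 ≤ A := Finset.sum_nonneg fun i _ => sq_nonneg _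
  have hB : 0 ≤ B := Finset.sum_nonneg fun i _ => sq_nonneg _
  have hS2 : S ^ 2 ≤ A * B := Finset.sum_mul_sq_le_sq_mul_sq _ _ _
  have hc : (0:ℝ) < 1/κ := by positivity
  have hxA : lip x x = A - x (Fin.last n) * x (Fin.last n) := by
    simp [lip, hA', sq]
  have hyB : lip y y = B - y (Fin.last n) * y (Fin.last n) := by
    simp [lip, hB', sq]
  have hxL : x (Fin.last n) ^ 2 = A + 1/κ := by
    rw [hxA] at hx1
    have e : (-1/κ:ℝ) = -(1/κ) := by ring
    rw [e] at hx1; rw [pow_two]; linarith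
  have hyL : y (Fin.last n) ^ 2 = B + 1/κ := by
    rw [hyB] at hy1
    have e : (-1/κ:ℝ) = -(1/κ) := by ring
    rw [e] at hy1; rw [pow_two]; linarith
  have hxLe : x (Fin.last n) = Real.sqrt (A + 1/κ) := by
    rw [← hxL, Real.sqrt_sq hx2.le]
  have hyLe : y (Fin.last n) = Real.sqrt (B + 1/κ) := by
    rw [← hyL, Real.sqrt_sq hy2.le]
  have hSle : S ≤ Real.sqrt (A * B) := by
    have : S ≤ |S| := le_abs_self S
    calc S ≤ |S| := le_abs_self S
      _ = Real.sqrt (S^2) := (Real.sqrt_sq_eq_abs S).symm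
      _ ≤ Real.sqrt (A * B) := Real.sqrt_le_sqrt hS2
  have hAMGM : Real.sqrt (A * B) ≤ (A + B) / 2 := by
    have h1 : A * B ≤ ((A + B)/2)^2 := by nlinarith [sq_nonneg (A - B)]
    calc Real.sqrt (A * B) ≤ Real.sqrt (((A + B)/2)^2) := Real.sqrt_le_sqrt h1
      _ = (A + B)/2 := Real.sqrt_sq (by linarith)
  have hmain : Real.sqrt (A * B) + 1/κ ≤ Real.sqrt ((A + 1/κ) * (B + 1/κ)) := by
    rw [Real.le_sqrt (by positivity) (by positivity)]
    have hsq : Real.sqrt (A * B) ^ 2 = A * B := Real.sq_sqrt (by positivity)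
    nlinarith [Real.sqrt_nonneg (A * B)]
  have hprod : x (Fin.last n) * y (Fin.last n) = Real.sqrt ((A + 1/κ) * (B + 1/κ)) := by
    rw [hxLe, hyLe, Real.sqrt_mul (by positivity)]
  have : lip x y = S - x (Fin.last n) * y (Fin.last n) := by simp [lip, hS']
  rw [this, hprod]
  have : (-1/κ : ℝ) = -(1/κ) := by ring
  rw [this]
  linarith

lemma cone_hyp_mem {n : ℕ} {κ : ℝ} (hκ : 0 < κ) {C : Set (Fin (n+1) → ℝ)}
    (hC : C ⊆ Hyp κ) {x : Fin (n+1) → ℝ} (hx : x ∈ coneOf C) (hxH : x ∈ Hyp κ) :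
    x ∈ C := by
  obtain ⟨t, ht, q, hq, rfl⟩ := hx
  have hqq : lip q q = -1/κ := (hC hq).1
  have h1 : lip (t • q) (t • q) = -1/κ := hxH.1
  rw [lip_smul_left, lip_smul_right, hqq] at h1
  have ht2 : t^2 = 1 := by
    have hκ' : κ ≠ 0 := ne_of_gt hκ
    field_simp at h1
    nlinarith
  have : (t - 1) * (t + 1) = 0 := by nlinarith
  rcases mul_eq_zero.mp this with h | h
  · have : t = 1 := by linarith
    rw [this, one_smul]; exact hq
  · exfalso; nlinarith

lemma maximizer_lorentz {n : ℕ} (κ : ℝ) (hκ : 0 < κ) (C : Set (Fin (n+1) → ℝ))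
    (hC : C ⊆ Hyp κ) (hconv : Convex ℝ (coneOf C))
    (p v : Fin (n+1) → ℝ) (hp : p ∈ Hyp κ) (hv : v ∈ C)
    (hmax : ∀ q ∈ C, lip p q ≤ lip p v) :
    (-(κ * lip p v)) • v ∈ coneOf C ∧ (-(κ * lip p v)) • v ≠ 0 ∧
      ∀ z ∈ coneOf C,
        lip (p - (-(κ * lip p v)) • v) (z - (-(κ * lip p v)) • v) ≤ 0 := by
  have hvH : v ∈ Hyp κ := hC hv
  have hpv : lip p v ≤ -1/κ := hyp_lip_le hκ hp hvH
  set α : ℝ := -(κ * lip p v) with hαdef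
  have hα1 : 1 ≤ α := by
    have : κ * lip p v ≤ κ * (-1/κ) := mul_le_mul_of_nonneg_left hpv hκ.le
    have h2 : κ * (-1/κ) = -1 := by field_simp
    rw [hαdef]; linarith [this.trans_eq h2]
  have hα0 : 0 < α := lt_of_lt_of_le one_pos hα1
  have hu_cone : α • v ∈ coneOf C := ⟨α, hα0.le, v, hv, rfl⟩
  have hvL : 0 < v (Fin.last n) := hvH.2
  have hu_ne : α • v ≠ 0 := by
    intro h0
    have := congrFun h0 (Fin.last n)
    simp only [Pi.smul_apply, smul_eq_mul, Pi.zero_apply] at this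
    nlinarith
  have hvv : lip v v = -1/κ := hvH.1
  have hMv : lip p v = -α/κ := by rw [hαdef]; field_simp
  -- key claim
  have key : ∀ q ∈ C, lip p q ≤ α * lip v q := by
    intro q hq
    have hqH : q ∈ Hyp κ := hC hq
    set P := lip p q with hPdef
    set V := lip v q with hVdef
    have hV : V ≤ -1/κ := hyp_lip_le hκ hvH hqH
    have hκV : κ * V ≤ -1 := by
      have : κ * V ≤ κ * (-1/κ) := mul_le_mul_of_nonneg_left hV hκ.le
      have h2 : κ * (-1/κ) = -1 := by field_simp
      linarith [this.trans_eq h2]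
    have hqq : lip q q = -1/κ := hqH.1
    have hqL : 0 < q (Fin.last n) := hqH.2
    have hquad : ∀ s : ℝ, 0 < s → s ≤ 1 →
        0 ≤ ((κ*P + α^2)^2 - α^2*(α^2 + 2*κ*α*V + 1)) * s^2
            + (2*κ*α^2*(α*V - P)) * s := by
      intro s hs0 hs1
      set w : Fin (n+1) → ℝ := (1 - s) • (α • v) + s • q with hwdef
      have hw_cone : w ∈ coneOf C :=
        hconv hu_cone ⟨1, zero_le_one, q, hq, (one_smul ℝ q).symm⟩
          (by linarith) hs0.le (by ring)
      set H : ℝ := (1-s)^2*α^2 - 2*κ*α*V*s*(1-s) + s^2 with hHdef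
      have hww : κ * lip w w = -H := by
        rw [hwdef]
        simp only [lip_add_left, lip_add_right, lip_smul_left, lip_smul_right]
        rw [lip_comm q v, ← hVdef, hvv, hqq, hHdef]
        field_simp; ring
      have hHpos : 0 < H := by
        rw [hHdef]
        nlinarith [sq_nonneg ((1-s)*α + s), mul_nonneg (mul_nonneg hs0.le (by linarith : (0:ℝ) ≤ 1 - s)) hα0.le]
      set R := Real.sqrt H with hRdef
      have hR0 : 0 < R := Real.sqrt_pos.mpr hHpos
      have hR2 : R^2 = H := Real.sq_sqrt hHpos.le
      set r : Fin (n+1) → ℝ := R⁻¹ • w with hrdef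
      have hr_cone : r ∈ coneOf C := by
        obtain ⟨t, ht, q', hq', hwq⟩ := hw_cone
        exact ⟨R⁻¹ * t, by positivity, q', hq', by rw [hrdef, hwq, smul_smul]⟩
      have hrr : lip r r = -1/κ := by
        have hlw : lip w w = -H/κ := by
          field_simp at hww ⊢; linarith
        rw [hrdef, lip_smul_left, lip_smul_right, hlw, ← hR2]
        field_simp
      have hwL : 0 < w (Fin.last n) := by
        rw [hwdef]
        simp only [Pi.add_apply, Pi.smul_apply, smul_eq_mul]
        nlinarith [mul_nonneg (by linarith : (0:ℝ) ≤ 1 - s) (mul_nonneg hα0.le hvL.le)]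
      have hrL : 0 < r (Fin.last n) := by
        rw [hrdef]
        simp only [Pi.smul_apply, smul_eq_mul]
        positivity
      have hrC : r ∈ C := cone_hyp_mem hκ hC hr_cone ⟨hrr, hrL⟩
      have hmaxr : lip p r ≤ lip p v := hmax r hrC
      have hpw : lip p w = (1-s)*α*(-α/κ) + s*P := by
        rw [hwdef]
        simp only [lip_add_right, lip_smul_right]
        rw [← hPdef, ← hMv]; ring
      have hpr : lip p r = R⁻¹ * lip p w := by rw [hrdef, lip_smul_right]
      have hle : lip p w ≤ R * (-α/κ) := by
        have h1 : R⁻¹ * lip p w ≤ -α/κ := by rw [← hpr, ← hMv]; exact hmaxr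
        have := mul_le_mul_of_nonneg_left h1 hR0.le
        rw [mul_inv_cancel_left₀ (ne_of_gt hR0)] at this
        exact this
      have hneg : R * (-α/κ) ≤ 0 := by
        apply mul_nonpos_of_nonneg_of_nonpos hR0.le
        have h0 : (-α/κ:ℝ) = -(α/κ) := by ring
        have : (0:ℝ) < α/κ := by positivity
        linarith [h0]
      have hsq : H * (α/κ)^2 ≤ (lip p w)^2 := by
        have h1 : 0 ≤ -(lip p w) := by linarith
        have h2 : -(R*(-α/κ)) ≤ -(lip p w) := by linarith
        have h3 : 0 ≤ -(R*(-α/κ)) := by linarith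
        have h4 : (R*(-α/κ))^2 ≤ (lip p w)^2 := by
          calc (R*(-α/κ))^2 = (-(R*(-α/κ)))^2 := by ring
            _ ≤ (-(lip p w))^2 := by exact pow_le_pow_left₀ h3 h2 2
            _ = (lip p w)^2 := by ring
        have h5 : (R*(-α/κ))^2 = H * (α/κ)^2 := by
          have : (R*(-α/κ))^2 = R^2 * (α/κ)^2 := by ring
          rw [this, hR2]
        linarith
      rw [hpw] at hsq
      have hκne : κ ≠ 0 := ne_of_gt hκ
      have expand : ((κ*P + α^2)^2 - α^2*(α^2 + 2*κ*α*V + 1)) * s^2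
            + (2*κ*α^2*(α*V - P)) * s
          = κ^2 * (((1-s)*α*(-α/κ) + s*P)^2 - H * (α/κ)^2) := by
        rw [hHdef]; field_simp; ring
      rw [expand]
      exact mul_nonneg (sq_nonneg κ) (by linarith)
    have hb := quad_coeff_nonneg _ _ hquad
    nlinarith [hb, mul_pos hκ (pow_pos hα0 2)]
  refine ⟨hu_cone, hu_ne, ?_⟩
  rintro z ⟨t, ht, q, hq, rfl⟩
  have hk := key q hq
  simp only [lip_sub_left, lip_sub_right, lip_smul_left, lip_smul_right]
  have e1 : α * (α * lip v v) = α * lip p v := by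
    rw [hvv, hMv]; field_simp
  have e2 : t * (lip p q) ≤ t * (α * lip v q) :=
    mul_le_mul_of_nonneg_left hk ht
  have e3 : lip q v = lip v q := lip_comm q v
  nlinarith [e2, e1]

/-- Equivalence between the intrinsic κ-projection and the Lorentz projection:
v = P_C(p) iff −κ⟨p,v⟩v is a nonzero Lorentz projection of p into K_C; in particular
a nonzero Lorentz projection of p into K_C exists. Here P_C(p) is the (unique)
maximizer of ⟨p,·⟩ over C. -/
theorem intrinsic_projection_iff_lorentz_projection {n : ℕ} (κ : ℝ) (hκ : 0 < κ)
    (C : Set (Fin (n+1) → ℝ)) (hC : C ⊆ Hyp κ) (hCc : IsClosed C)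
    (hconv : Convex ℝ (coneOf C))
    (p v : Fin (n+1) → ℝ) (hp : p ∈ Hyp κ) (hv : v ∈ C)
    (Pc : Fin (n+1) → ℝ) (hPmem : Pc ∈ C)
    (hPmax : ∀ q ∈ C, lip p q ≤ lip p Pc)
    (hPuniq : ∀ y ∈ C, (∀ q ∈ C, lip p q ≤ lip p y) → y = Pc) :
    ((v = Pc) ↔
      ((-(κ * lip p v)) • v ∈ coneOf C ∧ (-(κ * lip p v)) • v ≠ 0 ∧
        ∀ z ∈ coneOf C,
          lip (p - (-(κ * lip p v)) • v) (z - (-(κ * lip p v)) • v) ≤ 0)) ∧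
    ∃ u : Fin (n+1) → ℝ, u ≠ 0 ∧ u ∈ coneOf C ∧
      ∀ z ∈ coneOf C, lip (p - u) (z - u) ≤ 0 := by
  constructor
  · constructor
    · rintro rfl
      exact maximizer_lorentz κ hκ C hC hconv p v hp hv hPmax
    · rintro ⟨h1, h2, h3⟩
      apply hPuniq v hv
      intro q hq
      have hvH : v ∈ Hyp κ := hC hv
      have hqH : q ∈ Hyp κ := hC hq
      have hpv : lip p v ≤ -1/κ := hyp_lip_le hκ hp hvH
      have hvq : lip v q ≤ -1/κ := hyp_lip_le hκ hvH hqH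
      set α : ℝ := -(κ * lip p v) with hαdef
      have hα1 : 1 ≤ α := by
        have h4 : κ * lip p v ≤ κ * (-1/κ) := mul_le_mul_of_nonneg_left hpv hκ.le
        have h5 : κ * (-1/κ) = -1 := by field_simp
        rw [hαdef]; linarith [h4.trans_eq h5]
      have hvv : lip v v = -1/κ := hvH.1
      have hMv : lip p v = -α/κ := by rw [hαdef]; field_simp
      have hz := h3 q ⟨1, zero_le_one, q, hq, (one_smul ℝ q).symm⟩
      simp only [lip_sub_left, lip_sub_right, lip_smul_left, lip_smul_right] at hz
      have e1 : α * (α * lip v v) = α * lip p v := by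
        rw [hvv, hMv]; field_simp
      have e2 : α * lip v q ≤ α * (-1/κ) :=
        mul_le_mul_of_nonneg_left hvq (by linarith)
      have e3 : α * (-1/κ) = lip p v := by rw [hMv]; ring
      linarith [hz, e1, e2.trans_eq e3]
  · obtain ⟨c1, c2, c3⟩ := maximizer_lorentz κ hκ C hC hconv p Pc hp hPmem hPmax
    exact ⟨_, c2, c1, c3⟩
end
end

section
/- Let p ∈ int(L), K ⊆ L a convex cone containing 0 such that C := K ∩ ℍⁿ_κ (with κ := −1/⟨p,p⟩) is a closed κ-hyperbolically convex set. Then 0 is a Lorentz projection of p into K, and the set of nonzero Lorentz projections of p into K contains exactly one element. -/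
noncomputable section

namespace Aux
variable {n : ℕ}

/-- spatial square sum -/
def sq' (x : Fin (n+1) → ℝ) : ℝ := ∑ i : Fin n, (x i.castSucc)^2

lemma sq'_nonneg (x : Fin (n+1) → ℝ) : 0 ≤ sq' x :=
  Finset.sum_nonneg fun i _ => sq_nonneg _

lemma lip_self (x : Fin (n+1) → ℝ) : lip x x = sq' x - (x (Fin.last n))^2 := by
  simp [lip, sq', sq]

lemma lip_comm (x y : Fin (n+1) → ℝ) : lip x y = lip y x := by
  simp [lip, mul_comm]

lemma lip_add_left (x y z : Fin (n+1) → ℝ) :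
    lip (x + y) z = lip x z + lip y z := by
  simp [lip, add_mul, Finset.sum_add_distrib]; ring

lemma lip_smul_left (s : ℝ) (x y : Fin (n+1) → ℝ) :
    lip (s • x) y = s * lip x y := by
  simp [lip, Finset.mul_sum, mul_assoc, mul_sub]

lemma lip_sub_left (x y z : Fin (n+1) → ℝ) :
    lip (x - y) z = lip x z - lip y z := by
  simp [lip, sub_mul, Finset.sum_sub_distrib]; ring

lemma lip_add_right (x y z : Fin (n+1) → ℝ) :
    lip x (y + z) = lip x y + lip x z := by
  rw [lip_comm, lip_add_left, lip_comm y x, lip_comm z x]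

lemma lip_smul_right (s : ℝ) (x y : Fin (n+1) → ℝ) :
    lip x (s • y) = s * lip x y := by
  rw [lip_comm, lip_smul_left, lip_comm]

lemma lip_sub_right (x y z : Fin (n+1) → ℝ) :
    lip x (y - z) = lip x y - lip x z := by
  rw [lip_comm, lip_sub_left, lip_comm y x, lip_comm z x]

lemma lip_zero_right (x : Fin (n+1) → ℝ) : lip x 0 = 0 := by simp [lip]

lemma abs_le_of_sq_le {a b : ℝ} (h : a^2 ≤ b^2) (hb : 0 ≤ b) : |a| ≤ b := by
  rw [← Real.sqrt_sq_eq_abs]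
  calc Real.sqrt (a^2) ≤ Real.sqrt (b^2) := Real.sqrt_le_sqrt h
  _ = b := Real.sqrt_sq hb

/-- Euclidean Cauchy–Schwarz for the spatial parts. -/
lemma spatial_cs (x y : Fin (n+1) → ℝ) :
    (∑ i : Fin n, x i.castSucc * y i.castSucc)^2 ≤ sq' x * sq' y :=
  Finset.sum_mul_sq_le_sq_mul_sq _ _ _

lemma eq_zero_of_last_eq_zero {y : Fin (n+1) → ℝ} (hy : lip y y ≤ 0)
    (h : y (Fin.last n) = 0) : y = 0 := by
  rw [lip_self, h] at hy
  have h0 : sq' y = 0 := le_antisymm (by simpa using hy) (sq'_nonneg y)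
  have hall : ∀ i : Fin n, y i.castSucc = 0 := by
    intro i
    have := (Finset.sum_eq_zero_iff_of_nonneg (fun i _ => sq_nonneg (y i.castSucc))).mp h0 i
      (Finset.mem_univ i)
    exact pow_eq_zero_iff (by norm_num) |>.mp this
  funext i
  refine Fin.lastCases ?_ ?_ i
  · simpa using h
  · intro j; simpa using hall j

lemma last_pos {y : Fin (n+1) → ℝ} (hy : lip y y ≤ 0) (hy' : 0 ≤ y (Fin.last n))
    (hy0 : y ≠ 0) : 0 < y (Fin.last n) := by
  rcases hy'.lt_or_eq with h | h
  · exact h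
  · exact absurd (eq_zero_of_last_eq_zero hy h.symm) hy0

/-- reverse Cauchy–Schwarz: two causal future vectors have nonpositive product. -/
lemma lip_nonpos {x y : Fin (n+1) → ℝ} (hx : lip x x ≤ 0) (hx' : 0 ≤ x (Fin.last n))
    (hy : lip y y ≤ 0) (hy' : 0 ≤ y (Fin.last n)) : lip x y ≤ 0 := by
  rw [lip_self] at hx hy
  have hcs := spatial_cs x y
  have h1 : (∑ i : Fin n, x i.castSucc * y i.castSucc) ≤ x (Fin.last n) * y (Fin.last n) := by
    refine le_trans (le_abs_self _) (abs_le_of_sq_le ?_ (mul_nonneg hx' hy'))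
    calc (∑ i : Fin n, x i.castSucc * y i.castSucc)^2 ≤ sq' x * sq' y := hcs
    _ ≤ (x (Fin.last n) * y (Fin.last n))^2 := by
        have := sq'_nonneg x; have := sq'_nonneg y; nlinarith
  simp only [lip]; linarith

/-- strict reverse Cauchy–Schwarz. -/
lemma lip_neg {x y : Fin (n+1) → ℝ} (hx : lip x x < 0) (hx' : 0 < x (Fin.last n))
    (hy : lip y y ≤ 0) (hy' : 0 ≤ y (Fin.last n)) (hy0 : y ≠ 0) : lip x y < 0 := by
  have hyl : 0 < y (Fin.last n) := last_pos hy hy' hy0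
  rw [lip_self] at hx
  have hy2 : sq' y ≤ (y (Fin.last n))^2 := by rw [lip_self] at hy; linarith
  have hcs := spatial_cs x y
  have hsx := sq'_nonneg x
  have hsy := sq'_nonneg y
  have h1 : (∑ i : Fin n, x i.castSucc * y i.castSucc) < x (Fin.last n) * y (Fin.last n) := by
    rcases hsy.lt_or_eq with h | h
    · refine lt_of_le_of_lt (le_abs_self _) ?_
      have h2 : (∑ i : Fin n, x i.castSucc * y i.castSucc)^2 <
          (x (Fin.last n) * y (Fin.last n))^2 := by nlinarith
      have habs := abs_le_of_sq_le (le_of_lt h2) (mul_nonneg hx'.le hyl.le)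
      rcases habs.lt_or_eq with h3 | h3
      · exact h3
      · exfalso
        rw [← h3] at h2
        simp [sq_abs] at h2
    · have : (∑ i : Fin n, x i.castSucc * y i.castSucc)^2 ≤ 0 := by
        calc _ ≤ sq' x * sq' y := hcs
        _ = 0 := by rw [← h]; ring
      have h0 : (∑ i : Fin n, x i.castSucc * y i.castSucc) = 0 := by nlinarith [sq_nonneg (∑ i : Fin n, x i.castSucc * y i.castSucc)]
      rw [h0]; positivity
  simp only [lip]; linarith


lemma limit_ineq {A B γ : ℝ} (hγ : 0 < γ)
    (h : ∀ s : ℝ, 0 < s → A + s*B ≤ A * Real.sqrt (1 + 2*s*γ + s^2)) :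
    B ≤ A * γ := by
  have key : ∀ s : ℝ, 0 < s →
      B ≤ A * (2*γ + s) / (Real.sqrt (1 + 2*s*γ + s^2) + 1) := by
    intro s hs
    set Q := 1 + 2*s*γ + s^2 with hQdef
    have hQ : 1 ≤ Q := by nlinarith
    have hsq : Real.sqrt Q ^ 2 = Q := Real.sq_sqrt (by linarith)
    have hs1 : 0 < Real.sqrt Q + 1 := by positivity
    have h1 : s * B ≤ A * (Real.sqrt Q - 1) := by have := h s hs; nlinarith
    rw [le_div_iff₀ hs1]
    have h3 := mul_le_mul_of_nonneg_right h1 (le_of_lt hs1)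
    have hh : Real.sqrt Q * Real.sqrt Q = Q := Real.mul_self_sqrt (by linarith)
    have h4 : (Real.sqrt Q - 1) * (Real.sqrt Q + 1) = Q - 1 := by linear_combination hh
    have h5 : s*(B*(Real.sqrt Q + 1)) ≤ s*(A*(2*γ+s)) := by
      calc s*(B*(Real.sqrt Q + 1)) = s * B * (Real.sqrt Q + 1) := by ring
      _ ≤ A * (Real.sqrt Q - 1) * (Real.sqrt Q + 1) := h3
      _ = A * ((Real.sqrt Q - 1) * (Real.sqrt Q + 1)) := by ring
      _ = A * (Q - 1) := by rw [h4]
      _ = s*(A*(2*γ+s)) := by rw [hQdef]; ring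
    exact (mul_le_mul_iff_right₀ hs).mp h5
  have hc : ContinuousAt
      (fun s : ℝ => A * (2*γ + s) / (Real.sqrt (1 + 2*s*γ + s^2) + 1)) 0 := by
    apply ContinuousAt.div
    · fun_prop
    · exact ((Real.continuous_sqrt.comp (by fun_prop)).add continuous_const).continuousAt
    · norm_num [Real.sqrt_one]
  have ht : Filter.Tendsto
      (fun s : ℝ => A * (2*γ + s) / (Real.sqrt (1 + 2*s*γ + s^2) + 1))
      (nhdsWithin 0 (Set.Ioi 0)) (nhds (A*γ)) := by
    have h0 : A * (2*γ + (0:ℝ)) / (Real.sqrt (1 + 2*0*γ + 0^2) + 1) = A*γ := by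
      norm_num [Real.sqrt_one]
      ring
    have := hc.tendsto
    rw [h0] at this
    exact this.mono_left nhdsWithin_le_nhds
  refine ge_of_tendsto ht ?_
  filter_upwards [self_mem_nhdsWithin] with s hs using key s hs


lemma lip_neg_left {n : ℕ} (x y : Fin (n+1) → ℝ) : lip (-x) y = - lip x y := by
  have := lip_smul_left (-1 : ℝ) x y
  simpa using this

lemma lip_continuous {n : ℕ} (p : Fin (n+1) → ℝ) :
    Continuous (fun w : Fin (n+1) → ℝ => lip p w) := by
  unfold lip
  fun_prop

lemma exists_max {n : ℕ} (p : Fin (n+1) → ℝ) (C : Set (Fin (n+1) → ℝ)) (hC : IsClosed C)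
    (hne : C.Nonempty)
    (hCL : ∀ w ∈ C, lip w w ≤ 0 ∧ 0 ≤ w (Fin.last n))
    (hpp : lip p p < 0) (hpl : 0 < p (Fin.last n)) :
    ∃ q ∈ C, ∀ w ∈ C, lip p w ≤ lip p q := by
  obtain ⟨w₀, hw₀⟩ := hne
  set f : (Fin (n+1) → ℝ) → ℝ := fun w => lip p w with hf
  set S : Set (Fin (n+1) → ℝ) := C ∩ f ⁻¹' (Set.Ici (f w₀)) with hS
  have hScl : IsClosed S := hC.inter (isClosed_Ici.preimage (lip_continuous p))
  -- bound
  have hsp : Real.sqrt (sq' p) < p (Fin.last n) := by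
    rw [lip_self] at hpp
    have := abs_le_of_sq_le (le_of_lt (by rw [Real.sq_sqrt (sq'_nonneg p)]; linarith) :
      (Real.sqrt (sq' p))^2 ≤ (p (Fin.last n))^2) hpl.le
    rcases (abs_of_nonneg (Real.sqrt_nonneg _) ▸ this).lt_or_eq with h | h
    · exact h
    · exfalso
      have h2 := Real.sq_sqrt (sq'_nonneg p)
      rw [h] at h2
      linarith
  set M : ℝ := (-(f w₀)) / (p (Fin.last n) - Real.sqrt (sq' p)) with hM
  have hbd : ∀ w ∈ S, ‖w‖ ≤ M := by
    intro w ⟨hwC, hwf⟩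
    obtain ⟨hww, hwl⟩ := hCL w hwC
    have hw2 : sq' w ≤ (w (Fin.last n))^2 := by rw [lip_self] at hww; linarith
    have hsw : Real.sqrt (sq' w) ≤ w (Fin.last n) := by
      calc Real.sqrt (sq' w) ≤ Real.sqrt ((w (Fin.last n))^2) := Real.sqrt_le_sqrt hw2
      _ = w (Fin.last n) := Real.sqrt_sq hwl
    have hcs : (∑ i : Fin n, p i.castSucc * w i.castSucc) ≤
        Real.sqrt (sq' p) * Real.sqrt (sq' w) := by
      refine le_trans (le_abs_self _) (abs_le_of_sq_le ?_ (by positivity))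
      rw [mul_pow, Real.sq_sqrt (sq'_nonneg p), Real.sq_sqrt (sq'_nonneg w)]
      exact spatial_cs p w
    have key : (p (Fin.last n) - Real.sqrt (sq' p)) * w (Fin.last n) ≤ -(f w₀) := by
      have h1 : f w₀ ≤ f w := hwf
      have h2 : -(f w) = p (Fin.last n) * w (Fin.last n) -
          (∑ i : Fin n, p i.castSucc * w i.castSucc) := by simp only [hf, lip]; ring
      nlinarith [mul_le_mul_of_nonneg_left hsw (Real.sqrt_nonneg (sq' p))]
    have hwlM : w (Fin.last n) ≤ M := by
      rw [hM, le_div_iff₀ (by linarith)]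
      nlinarith [key]
    have h0M : 0 ≤ M := le_trans hwl hwlM
    rw [show w = fun i => w i from rfl]
    refine (pi_norm_le_iff_of_nonneg h0M).mpr fun i => ?_
    refine Fin.lastCases ?_ ?_ i
    · rw [Real.norm_eq_abs, abs_of_nonneg hwl]; exact hwlM
    · intro j
      rw [Real.norm_eq_abs]
      refine le_trans (abs_le_of_sq_le ?_ hwl) hwlM
      have hsingle : (w j.castSucc)^2 ≤ sq' w :=
        Finset.single_le_sum (f := fun i : Fin n => (w i.castSucc)^2)
          (fun i _ => sq_nonneg _) (Finset.mem_univ j)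
      linarith
    
  have hSb : Bornology.IsBounded S := by
    rw [Metric.isBounded_iff_subset_closedBall 0]
    exact ⟨M, fun w hw => by simpa [Metric.mem_closedBall, dist_zero_right] using hbd w hw⟩
  have hScp : IsCompact S := Metric.isCompact_of_isClosed_isBounded hScl hSb
  have hSne : S.Nonempty := ⟨w₀, hw₀, Set.mem_preimage.mpr (Set.self_mem_Ici)⟩
  obtain ⟨q, hqS, hqmax⟩ := hScp.exists_isMaxOn hSne (lip_continuous p).continuousOn
  refine ⟨q, hqS.1, fun w hw => ?_⟩
  rcases le_or_gt (f w₀) (f w) with h | h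
  · exact hqmax ⟨hw, h⟩
  · exact le_trans h.le (hqmax ⟨hw₀, Set.mem_preimage.mpr (Set.self_mem_Ici)⟩)

end Aux


set_option maxHeartbeats 2000000

/-- For p ∈ int(L) and a convex cone K ⊆ L with 0 ∈ K such that C = K ∩ ℍⁿ_κ
(κ = −1/⟨p,p⟩) is a nonempty closed κ-hyperbolically convex set: 0 is a Lorentz
projection of p into K, and there is exactly one nonzero Lorentz projection. -/
theorem lorentz_projection_exists_unique {n : ℕ}
    (p : Fin (n+1) → ℝ) (hp : p ∈ LorentzConeInt)
    (K : Set (Fin (n+1) → ℝ)) (hK : K ⊆ LorentzCone)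
    (hconv : Convex ℝ K) (hcone : ∀ t : ℝ, 0 < t → ∀ z ∈ K, t • z ∈ K)
    (h0 : (0 : Fin (n+1) → ℝ) ∈ K)
    (hCc : IsClosed (K ∩ Hyp (-1 / lip p p)))
    (hCne : (K ∩ Hyp (-1 / lip p p)).Nonempty) :
    (∀ z ∈ K, lip (p - 0) (z - 0) ≤ 0) ∧
    (∃! u : Fin (n+1) → ℝ, u ≠ 0 ∧ u ∈ K ∧ ∀ z ∈ K, lip (p - u) (z - u) ≤ 0) := by
  obtain ⟨hpp, hpl⟩ := hp
  set κ : ℝ := -1 / lip p p with hκdef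
  have hκ : 0 < κ := by
    rw [hκdef, div_pos_iff]
    right
    constructor <;> linarith
  have hκne : κ ≠ 0 := ne_of_gt hκ
  have hppne : lip p p ≠ 0 := ne_of_lt hpp
  have hppκ : lip p p = -1/κ := by
    rw [hκdef]
    field_simp
  clear_value κ
  -- Part 1
  have part1 : ∀ z ∈ K, lip (p - 0) (z - 0) ≤ 0 := by
    intro z hz
    rw [sub_zero, sub_zero]
    obtain ⟨hz1, hz2⟩ := hK hz
    exact Aux.lip_nonpos hpp.le hpl.le hz1 hz2
  refine ⟨part1, ?_⟩
  -- the maximizer q on C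
  set C : Set (Fin (n+1) → ℝ) := K ∩ Hyp κ with hCdef
  obtain ⟨q, hqC, hqmax⟩ := Aux.exists_max p C hCc hCne
    (fun w hw => ⟨(hK hw.1).1, (hK hw.1).2⟩) hpp hpl
  have hqK : q ∈ K := hqC.1
  have hqq : lip q q = -1/κ := hqC.2.1
  have hql : 0 < q (Fin.last n) := hqC.2.2
  have hq0 : q ≠ 0 := by
    intro h
    rw [h] at hql
    simp at hql
  set A : ℝ := lip p q with hAdef
  clear_value A
  have hA : A < 0 := hAdef ▸ Aux.lip_neg hpp hpl (hK hqK).1 (hK hqK).2 hq0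
  set t : ℝ := -(κ * A) with htdef
  clear_value t
  have ht : 0 < t := by nlinarith
  set u : Fin (n+1) → ℝ := t • q with hudef
  clear_value u
  have huK : u ∈ K := hudef ▸ hcone t ht q hqK
  have hul : 0 < u (Fin.last n) := by
    have h1 : u (Fin.last n) = t * q (Fin.last n) := by rw [hudef]; rfl
    nlinarith
  have hu0 : u ≠ 0 := by
    intro h
    rw [h] at hul
    simp at hul
  have hpuq : lip p u = t * A := by rw [hudef, Aux.lip_smul_right, hAdef]
  have huu : lip u u = -(t^2)/κ := by
    rw [hudef, Aux.lip_smul_left, Aux.lip_smul_right, hqq]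
    field_simp [hκne]
  have hquu : t * lip q u = -(t^2)/κ := by
    rw [hudef, Aux.lip_smul_right, hqq]
    field_simp [hκne]
  have hpu_u : lip (p - u) u = 0 := by
    rw [Aux.lip_sub_left, hpuq, huu, htdef]
    field_simp [hκne]
    ring
  have hpu_equ : lip p u = t * lip q u := by
    rw [hpuq, hquu, htdef]
    field_simp [hκne]
  -- key timelike inequality
  have keyT : ∀ z ∈ K, lip z z < 0 → lip p z ≤ t * lip q z := by
    intro z hz hzz
    have hz0 : z ≠ 0 := by
      intro h
      rw [h] at hzz
      rw [Aux.lip_zero_right 0] at hzz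
      exact lt_irrefl 0 hzz
    have hzl : 0 < z (Fin.last n) := Aux.last_pos (hK hz).1 (hK hz).2 hz0
    set r : ℝ := Real.sqrt (-(κ * lip z z)) with hrdef
    have hrsq : r^2 = -(κ * lip z z) := Real.sq_sqrt (by nlinarith)
    have hrpos : 0 < r := Real.sqrt_pos.mpr (by nlinarith)
    have hrne : r ≠ 0 := ne_of_gt hrpos
    clear_value r
    have hzz' : lip z z = -(r^2)/κ := by
      rw [hrsq]
      field_simp [hκne]
    set w : Fin (n+1) → ℝ := (1/r) • z with hwdef
    clear_value w
    have hwK : w ∈ K := hwdef ▸ hcone (1/r) (by positivity) z hz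
    have hzw_p : lip p w = (1/r) * lip p z := by rw [hwdef, Aux.lip_smul_right]
    have hzw_q : lip q w = (1/r) * lip q z := by rw [hwdef, Aux.lip_smul_right]
    have hww : lip w w = -1/κ := by
      rw [hwdef, Aux.lip_smul_left, Aux.lip_smul_right, hzz']
      field_simp [hrne, hκne]
    have hwl : 0 < w (Fin.last n) := by
      have h1 : w (Fin.last n) = (1/r) * z (Fin.last n) := by rw [hwdef]; rfl
      rw [h1]
      exact mul_pos (by positivity) hzl
    have hwC : w ∈ C := ⟨hwK, hww, hwl⟩
    have hw0 : w ≠ 0 := by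
      intro h
      rw [h] at hwl
      simp at hwl
    set B : ℝ := lip p w with hBdef
    clear_value B
    set γ : ℝ := -(κ * lip q w) with hγdef
    clear_value γ
    have hγpos : 0 < γ := by
      have hqs : lip q q < 0 := by
        rw [hqq, neg_div]
        exact neg_lt_zero.mpr (by positivity)
      have := Aux.lip_neg hqs hql (hK hwK).1 (hK hwK).2 hw0
      nlinarith
    have hmax : ∀ s : ℝ, 0 < s → A + s * B ≤ A * Real.sqrt (1 + 2*s*γ + s^2) := by
      intro s hs
      set y : Fin (n+1) → ℝ := q + s • w with hydef
      clear_value y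
      have hyK : y ∈ K := by
        have hc : (0:ℝ) < 1 + s := by linarith
        have hm : (1/(1+s)) • q + (s/(1+s)) • w ∈ K :=
          hconv hqK hwK (by positivity) (by positivity) (by field_simp [hc.ne'])
        have h2 := hcone (1+s) hc _ hm
        have hy : (1+s) • ((1/(1+s)) • q + (s/(1+s)) • w) = y := by
          rw [smul_add, smul_smul, smul_smul, hydef]
          rw [show (1+s) * (1/(1+s)) = 1 by field_simp [hc.ne'], one_smul]
          rw [show (1+s) * (s/(1+s)) = s by field_simp [hc.ne']]
        rwa [hy] at h2
      have hQpos : (0:ℝ) < 1 + 2*s*γ + s^2 := by nlinarith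
      have hqw : lip q w = -γ/κ := by
        rw [hγdef]
        field_simp [hκne]
      have hyy : lip y y = -(1 + 2*s*γ + s^2)/κ := by
        rw [hydef, Aux.lip_add_left, Aux.lip_add_right, Aux.lip_add_right,
          Aux.lip_smul_left, Aux.lip_smul_right, Aux.lip_smul_left, Aux.lip_smul_right,
          hqq, hww, Aux.lip_comm w q, hqw]
        field_simp [hκne]
        ring
      set R : ℝ := Real.sqrt (1 + 2*s*γ + s^2) with hRdef
      have hRsq : R^2 = 1 + 2*s*γ + s^2 := Real.sq_sqrt hQpos.le
      have hRpos : 0 < R := Real.sqrt_pos.mpr hQpos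
      have hRne : R ≠ 0 := ne_of_gt hRpos
      clear_value R
      set yh : Fin (n+1) → ℝ := (1/R) • y with hyhdef
      clear_value yh
      have hyhK : yh ∈ K := hyhdef ▸ hcone (1/R) (by positivity) y hyK
      have hyy' : lip y y = -(R^2)/κ := by rw [hyy, hRsq]
      have hyhh : lip yh yh = -1/κ := by
        rw [hyhdef, Aux.lip_smul_left, Aux.lip_smul_right, hyy']
        field_simp [hRne, hκne]
      have hyl : 0 < y (Fin.last n) := by
        have h1 : y (Fin.last n) = q (Fin.last n) + s * w (Fin.last n) := by rw [hydef]; rfl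
        nlinarith
      have hyhl : 0 < yh (Fin.last n) := by
        have h1 : yh (Fin.last n) = (1/R) * y (Fin.last n) := by rw [hyhdef]; rfl
        rw [h1]
        exact mul_pos (by positivity) hyl
      have hyhC : yh ∈ C := ⟨hyhK, hyhh, hyhl⟩
      have hle := hqmax yh hyhC
      have hpy : lip p y = A + s * B := by
        rw [hydef, Aux.lip_add_right, Aux.lip_smul_right, hAdef, hBdef]
      rw [hyhdef, Aux.lip_smul_right, hpy] at hle
      calc A + s * B = R * ((1/R) * (A + s * B)) := by field_simp [hRne]
      _ ≤ R * A := mul_le_mul_of_nonneg_left hle hRpos.le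
      _ = A * R := mul_comm _ _
    have hkey : B ≤ A * γ := Aux.limit_ineq hγpos hmax
    calc lip p z = r * ((1/r) * lip p z) := by field_simp [hrne]
    _ = r * B := by rw [hzw_p]
    _ ≤ r * (A * γ) := mul_le_mul_of_nonneg_left hkey hrpos.le
    _ = t * lip q z := by
        rw [hγdef, hzw_q, htdef]
        field_simp [hrne]
  -- full projection property of u
  have hproj : ∀ z ∈ K, lip (p - u) (z - u) ≤ 0 := by
    intro z hz
    have hle : lip p z ≤ t * lip q z := by
      rcases lt_or_eq_of_le (hK hz).1 with hzz | hzz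
      · exact keyT z hz hzz
      · by_cases hz0 : z = 0
        · subst hz0
          simp [Aux.lip_zero_right]
        · set m : Fin (n+1) → ℝ := (1/2:ℝ) • z + (1/2:ℝ) • u with hmdef
          have hmK : m ∈ K := hconv hz huK (by norm_num) (by norm_num) (by norm_num)
          have hzu : lip z u ≤ 0 :=
            Aux.lip_nonpos (hK hz).1 (hK hz).2 (hK huK).1 (hK huK).2
          have huuneg : lip u u < 0 := by
            rw [huu, neg_div]
            exact neg_lt_zero.mpr (by positivity)
          have hmm : lip m m < 0 := by
            simp only [hmdef, Aux.lip_add_left, Aux.lip_add_right,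
              Aux.lip_smul_left, Aux.lip_smul_right]
            have hcm := Aux.lip_comm u z
            linarith
          have h := keyT m hmK hmm
          have e1 : lip p m = (1/2) * lip p z + (1/2) * lip p u := by
            rw [hmdef, Aux.lip_add_right, Aux.lip_smul_right, Aux.lip_smul_right]
          have e2 : lip q m = (1/2) * lip q z + (1/2) * lip q u := by
            rw [hmdef, Aux.lip_add_right, Aux.lip_smul_right, Aux.lip_smul_right]
          rw [e1, e2] at h
          nlinarith [hpu_equ]
    rw [Aux.lip_sub_right, hpu_u, sub_zero, Aux.lip_sub_left, hudef, Aux.lip_smul_left]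
    linarith
  -- uniqueness
  have uniq : ∀ v₁, (v₁ ≠ 0 ∧ v₁ ∈ K ∧ ∀ z ∈ K, lip (p - v₁) (z - v₁) ≤ 0) →
      ∀ v₂, (v₂ ≠ 0 ∧ v₂ ∈ K ∧ ∀ z ∈ K, lip (p - v₂) (z - v₂) ≤ 0) → v₁ = v₂ := by
    have horth : ∀ v, v ∈ K → (∀ z ∈ K, lip (p - v) (z - v) ≤ 0) → lip (p - v) v = 0 := by
      intro v hvK hvp
      have h2 := hvp ((2:ℝ) • v) (hcone 2 two_pos v hvK)
      have h3 := hvp (((1:ℝ)/2) • v) (hcone (1/2) (by norm_num) v hvK)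
      rw [Aux.lip_sub_right, Aux.lip_smul_right] at h2 h3
      linarith
    rintro v₁ ⟨h10, h1K, h1p⟩ v₂ ⟨h20, h2K, h2p⟩
    have e1 := horth v₁ h1K h1p
    have e2 := horth v₂ h2K h2p
    rw [Aux.lip_sub_left] at e1 e2
    have c1 : lip p v₂ ≤ lip v₁ v₂ := by
      have h := h1p v₂ h2K
      rw [Aux.lip_sub_right, Aux.lip_sub_left, Aux.lip_sub_left] at h
      linarith
    have c2 : lip p v₁ ≤ lip v₂ v₁ := by
      have h := h2p v₁ h1K
      rw [Aux.lip_sub_right, Aux.lip_sub_left, Aux.lip_sub_left] at h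
      linarith
    have hcm := Aux.lip_comm v₂ v₁
    have s1 : lip v₁ v₁ < 0 := by
      have := Aux.lip_neg hpp hpl (hK h1K).1 (hK h1K).2 h10
      linarith
    have s2 : lip v₂ v₂ < 0 := by
      have := Aux.lip_neg hpp hpl (hK h2K).1 (hK h2K).2 h20
      linarith
    have l1 := Aux.last_pos (hK h1K).1 (hK h1K).2 h10
    have l2 := Aux.last_pos (hK h2K).1 (hK h2K).2 h20
    by_contra hne
    have hd0 : v₂ - v₁ ≠ 0 := sub_ne_zero.mpr (fun h => hne h.symm)
    have hdd : lip (v₂ - v₁) (v₂ - v₁) ≤ 0 := by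
      rw [Aux.lip_sub_left, Aux.lip_sub_right, Aux.lip_sub_right]
      linarith
    rcases le_or_gt 0 ((v₂ - v₁) (Fin.last n)) with hdl | hdl
    · have h := Aux.lip_neg s1 l1 hdd hdl hd0
      rw [Aux.lip_sub_right] at h
      linarith
    · have hnd : -(v₂ - v₁) ≠ 0 := neg_ne_zero.mpr hd0
      have hndd : lip (-(v₂ - v₁)) (-(v₂ - v₁)) ≤ 0 := by
        rw [Aux.lip_neg_left, Aux.lip_comm, Aux.lip_neg_left, Aux.lip_comm]
        linarith
      have hndl : 0 ≤ (-(v₂ - v₁)) (Fin.last n) := by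
        have h1 : (-(v₂ - v₁)) (Fin.last n) = -((v₂ - v₁) (Fin.last n)) := rfl
        linarith [h1.ge, h1.le]
      have h := Aux.lip_neg s2 l2 hndd hndl hnd
      rw [Aux.lip_comm, Aux.lip_neg_left, Aux.lip_comm, Aux.lip_sub_right] at h
      linarith
  exact ⟨u, ⟨hu0, huK, hproj⟩, fun v hv => uniq v hv u ⟨hu0, huK, hproj⟩⟩
end
end

section
/- Let p ∈ int(L) and K ⊆ L a convex cone with 0 ∈ K such that K ∩ ℍⁿ_κ is closed κ-hyperbolically convex (κ := −1/⟨p,p⟩). If p ∈ K, then the set of Lorentz projections of p into K equals {0, p}. Moreover, for any λ > 0, the Lorentz projection set of λp into K equals λ times the Lorentz projection set of p into K. -/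
open Pointwise

noncomputable section

/-- spatial part dot product -/
def sdot {n : ℕ} (x y : Fin (n+1) → ℝ) : ℝ := ∑ i : Fin n, x i.castSucc * y i.castSucc

lemma lip_def {n : ℕ} (x y : Fin (n+1) → ℝ) :
    lip x y = sdot x y - x (Fin.last n) * y (Fin.last n) := rfl

lemma sdot_self_nonneg {n : ℕ} (x : Fin (n+1) → ℝ) : 0 ≤ sdot x x :=
  Finset.sum_nonneg fun i _ => mul_self_nonneg _

lemma sdot_cs {n : ℕ} (x y : Fin (n+1) → ℝ) : (sdot x y)^2 ≤ sdot x x * sdot y y := by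
  have := Finset.sum_mul_sq_le_sq_mul_sq Finset.univ
    (fun i : Fin n => x i.castSucc) (fun i : Fin n => y i.castSucc)
  simpa [sdot, sq] using this

lemma lip_smul_smul {n : ℕ} (a : ℝ) (x y : Fin (n+1) → ℝ) :
    lip (a • x) (a • y) = a^2 * lip x y := by
  unfold lip
  rw [mul_sub, Finset.mul_sum]
  simp only [Pi.smul_apply, smul_eq_mul]
  congr 1
  · exact Finset.sum_congr rfl fun i _ => by ring
  · ring

lemma eq_zero_of_sdot {n : ℕ} (y : Fin (n+1) → ℝ) (h : sdot y y ≤ 0)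
    (hl : y (Fin.last n) = 0) : y = 0 := by
  have h0 : sdot y y = 0 := le_antisymm h (sdot_self_nonneg y)
  have := (Finset.sum_eq_zero_iff_of_nonneg
    (fun i _ => mul_self_nonneg (y i.castSucc))).mp h0
  funext i
  rcases Fin.eq_castSucc_or_eq_last i with ⟨j, rfl⟩ | rfl
  · have := this j (Finset.mem_univ j)
    have := mul_self_eq_zero.mp this
    simpa using this
  · simpa using hl

lemma key {n : ℕ} (p y : Fin (n+1) → ℝ) (hpp : lip p p < 0)
    (hyy : lip y y ≤ 0) (hS : 0 ≤ y (Fin.last n))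
    (h1 : lip (p - y) y = 0) (h2 : lip (p - y) (p - y) ≤ 0) :
    y = 0 ∨ y = p := by
  by_cases hy0 : y = 0
  · exact Or.inl hy0
  right
  -- notation
  set S := y (Fin.last n) with hSdef
  have hSpos : 0 < S := by
    rcases lt_or_eq_of_le hS with h | h
    · exact h
    · exfalso; apply hy0
      apply eq_zero_of_sdot y _ h.symm
      have := hyy
      rw [lip_def] at this
      nlinarith [this]
  set w := p - y with hw
  have hpw : p = w + y := by simp [hw]
  set t := w (Fin.last n) with ht
  -- h1 : sdot w y = t * S
  have h1' : sdot w y = t * S := by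
    have := h1; rw [lip_def] at this; linarith
  have h2' : sdot w w ≤ t^2 := by
    have := h2; rw [lip_def] at this; nlinarith
  have hyy' : sdot y y ≤ S^2 := by
    have := hyy; rw [lip_def] at this; nlinarith
  by_cases ht0 : t = 0
  · -- w' = 0, so w = 0, y = p
    have hww : sdot w w ≤ 0 := by rw [ht0] at h2'; simpa using h2'
    have hw0 : w = 0 := eq_zero_of_sdot w hww (by rw [← ht]; exact ht0)
    have : p - y = 0 := by rw [← hw]; exact hw0
    exact (sub_eq_zero.mp this).symm
  · exfalso
    -- t ≠ 0 case: show lip y y = 0 and lip w w = 0, lip w y = 0, contradict lip p p < 0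
    have hcs := sdot_cs w y
    -- (tS)^2 ≤ sdot w w * sdot y y ≤ t^2 * S^2
    have ht2 : 0 < t^2 := by positivity
    have hS2 : 0 < S^2 := by positivity
    have hsww : 0 ≤ sdot w w := sdot_self_nonneg w
    have hsyy : 0 ≤ sdot y y := sdot_self_nonneg y
    -- from (t*S)^2 ≤ sdot w w * sdot y y ≤ sdot w w * S^2 get t^2 ≤ sdot w w, so = t^2
    have hww_eq : sdot w w = t^2 := by nlinarith [h1' ▸ hcs]
    have hyy_eq : sdot y y = S^2 := by nlinarith [h1' ▸ hcs]
    -- lip p p = lip w w + 2 lip w y + lip y y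
    have hexp : lip p p = lip w w + 2 * (lip w y) + lip y y := by
      rw [lip_def, lip_def, lip_def, lip_def]
      unfold sdot
      rw [hpw]
      simp only [Pi.add_apply]
      have hsum : ∑ i : Fin n, (w i.castSucc + y i.castSucc) * (w i.castSucc + y i.castSucc)
          = ∑ i : Fin n, (w i.castSucc * w i.castSucc
              + 2 * (w i.castSucc * y i.castSucc) + y i.castSucc * y i.castSucc) :=
        Finset.sum_congr rfl fun i _ => by ring
      rw [hsum, Finset.sum_add_distrib, Finset.sum_add_distrib, ← Finset.mul_sum]
      ring
    have hlwy : lip w y = 0 := h1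
    have hlww : lip w w = 0 := by rw [lip_def, hww_eq]; ring
    have hlyy : lip y y = 0 := by rw [lip_def, hyy_eq]; ring
    rw [hexp, hlwy, hlww, hlyy] at hpp
    norm_num at hpp

lemma lip_nonpos {n : ℕ} {p z : Fin (n+1) → ℝ} (hp : p ∈ LorentzConeInt)
    (hz : z ∈ LorentzCone) : lip p z ≤ 0 := by
  obtain ⟨hpp, hP⟩ := hp
  obtain ⟨hzz, hZ⟩ := hz
  rw [lip_def] at hpp hzz ⊢
  nlinarith [sdot_cs p z, sdot_self_nonneg p, sdot_self_nonneg z,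
    mul_nonneg hP.le hZ, sq_nonneg (sdot p z - p (Fin.last n) * z (Fin.last n)),
    sq_nonneg (sdot p z + p (Fin.last n) * z (Fin.last n))]

private theorem lorentz_main {n : ℕ}
    (p : Fin (n+1) → ℝ) (hp : p ∈ LorentzConeInt)
    (K : Set (Fin (n+1) → ℝ)) (hK : K ⊆ LorentzCone)
    (hcone : ∀ t : ℝ, 0 < t → ∀ z ∈ K, t • z ∈ K)
    (h0 : (0 : Fin (n+1) → ℝ) ∈ K)
    (hpK : p ∈ K) :
    ({y ∈ K | ∀ z ∈ K, lip (p - y) (z - y) ≤ 0} = {0, p}) ∧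
    (∀ l : ℝ, 0 < l →
      {y ∈ K | ∀ z ∈ K, lip (l • p - y) (z - y) ≤ 0} =
        l • {y ∈ K | ∀ z ∈ K, lip (p - y) (z - y) ≤ 0}) := by
  constructor
  · ext y
    simp only [Set.mem_setOf_eq, Set.mem_insert_iff, Set.mem_singleton_iff]
    constructor
    · rintro ⟨hyK, hall⟩
      obtain ⟨hyy, hS⟩ := hK hyK
      have h2 := hall p hpK
      have ha := hall 0 h0
      have hb := hall (2 • y) (by rw [← Nat.cast_smul_eq_nsmul ℝ]; simpa using hcone 2 (by norm_num) y hyK)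
      have h1 : lip (p - y) y = 0 := by
        have e1 : (0 : Fin (n+1) → ℝ) - y = (-1 : ℝ) • y := by
          funext i; simp
        have e2 : (2 : ℕ) • y - y = y := by
          funext i; simp [two_smul]
        rw [e2] at hb
        rw [e1] at ha
        -- lip x ((-1)•y) = - lip x y
        have : lip (p - y) ((-1 : ℝ) • y) = - lip (p - y) y := by
          unfold lip
          simp only [Pi.smul_apply, smul_eq_mul]
          have hterm : ∀ i : Fin n, (p - y) i.castSucc * (-1 * y i.castSucc)
              = -((p - y) i.castSucc * y i.castSucc) := fun i => by ring
          rw [Finset.sum_congr rfl fun i _ => hterm i, Finset.sum_neg_distrib]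
          ring
        rw [this] at ha
        linarith
      exact key p y hp.1 hyy hS h1 h2
    · rintro (rfl | h)
      · refine ⟨h0, fun z hz => ?_⟩
        have : p - 0 = p := by simp
        rw [this, sub_zero]
        exact lip_nonpos hp (hK hz)
      · rw [h]
        refine ⟨hpK, fun z hz => ?_⟩
        have : p - p = 0 := by simp
        rw [this]
        unfold lip
        simp
  · intro l hl
    ext y
    simp only [Set.mem_setOf_eq]
    constructor
    · rintro ⟨hyK, hall⟩
      refine Set.mem_smul_set.mpr ⟨l⁻¹ • y, ⟨hcone l⁻¹ (by positivity) y hyK, fun z' hz' => ?_⟩,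
        by rw [smul_inv_smul₀ hl.ne']⟩
      have hz2 := hall (l • z') (hcone l hl z' hz')
      have e1 : p - l⁻¹ • y = l⁻¹ • (l • p - y) := by
        rw [smul_sub, inv_smul_smul₀ hl.ne']
      have e2 : z' - l⁻¹ • y = l⁻¹ • (l • z' - y) := by
        rw [smul_sub, inv_smul_smul₀ hl.ne']
      rw [e1, e2, lip_smul_smul]
      have : (0:ℝ) < l⁻¹^2 := by positivity
      exact mul_nonpos_of_nonneg_of_nonpos this.le hz2
    · rintro hy
      obtain ⟨y', ⟨hy'K, hall'⟩, rfl⟩ := Set.mem_smul_set.mp hy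
      refine ⟨hcone l hl y' hy'K, fun z hz => ?_⟩
      have hz' := hall' (l⁻¹ • z) (hcone l⁻¹ (by positivity) z hz)
      have e1 : l • p - l • y' = l • (p - y') := (smul_sub l p y').symm
      have e2 : z - l • y' = l • (l⁻¹ • z - y') := by
        rw [smul_sub, smul_inv_smul₀ hl.ne']
      rw [e1, e2, lip_smul_smul]
      have : (0:ℝ) < l^2 := by positivity
      exact mul_nonpos_of_nonneg_of_nonpos this.le hz'


/-- If p ∈ K, then the Lorentz projection set of p into K is {0, p}; moreover the
Lorentz projection set is positively homogeneous: Λ_K(λp) = λΛ_K(p) for λ > 0. -/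
theorem lorentz_projection_of_mem_and_homogeneous {n : ℕ}
    (p : Fin (n+1) → ℝ) (hp : p ∈ LorentzConeInt)
    (K : Set (Fin (n+1) → ℝ)) (hK : K ⊆ LorentzCone)
    (hconv : Convex ℝ K) (hcone : ∀ t : ℝ, 0 < t → ∀ z ∈ K, t • z ∈ K)
    (h0 : (0 : Fin (n+1) → ℝ) ∈ K)
    (hCc : IsClosed (K ∩ Hyp (-1 / lip p p)))
    (hpK : p ∈ K) :
    ({y ∈ K | ∀ z ∈ K, lip (p - y) (z - y) ≤ 0} = {0, p}) ∧
    (∀ l : ℝ, 0 < l →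
      {y ∈ K | ∀ z ∈ K, lip (l • p - y) (z - y) ≤ 0} =
        l • {y ∈ K | ∀ z ∈ K, lip (p - y) (z - y) ≤ 0}) := by
  exact lorentz_main p hp K hK hcone h0 hpK
end
end
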